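/- arXiv:1202.0524 — 6 statements merged into one kernel-verified Lean document; each statement's English description precedes it below -/
import Mathlib

section
/- Let v₁, v₂ ∈ ℤ² be primitive vectors with |det(v₁, v₂)| ≥ 2. Then the parallelogram Π = [0, v₁] + [0, v₂] strictly contains a lattice segment of lattice length 2; that is, there exist a lattice point A and a primitive vector w with A + 2[0, w] ⊆ Π and A + 2[0,w] ≠ Π. -/
open Pointwise

/-- The real point corresponding to a lattice point. -/
def coeV {n : ℕ} (v : Fin n → ℤ) : Fin n → ℝ := fun i => (v i : ℝ)

/-- A vector in `ℤ^n` is primitive if the gcd of its coordinates is `1`. -/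
def IsPrim {n : ℕ} (v : Fin n → ℤ) : Prop := Finset.univ.gcd v = 1

lemma prim_coprime (v : Fin 2 → ℤ) (h : IsPrim v) : IsCoprime (v 0) (v 1) := by
  rw [Int.isCoprime_iff_gcd_eq_one]
  have hd : (↑(Int.gcd (v 0) (v 1)) : ℤ) ∣ Finset.univ.gcd v := by
    apply Finset.dvd_gcd
    intro i _
    fin_cases i
    · exact Int.gcd_dvd_left _ _
    · exact Int.gcd_dvd_right _ _
  rw [h] at hd
  have := Int.eq_one_of_dvd_one (by positivity) hd
  omega

lemma prim_of_comb (w : Fin 2 → ℤ) (c d : ℤ) (h : c * w 0 + d * w 1 = 1) : IsPrim w := by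
  have hg0 : Finset.univ.gcd w ∣ w 0 := Finset.gcd_dvd (Finset.mem_univ 0)
  have hg1 : Finset.univ.gcd w ∣ w 1 := Finset.gcd_dvd (Finset.mem_univ 1)
  have hg : Finset.univ.gcd w ∣ 1 := by
    rw [← h]; exact dvd_add (Dvd.dvd.mul_left hg0 c) (Dvd.dvd.mul_left hg1 d)
  have hn : normalize (Finset.univ.gcd w) = Finset.univ.gcd w := Finset.normalize_gcd
  rcases Int.isUnit_iff.mp (isUnit_of_dvd_one hg) with h1 | h1
  · exact h1
  · rw [h1, Int.normalize_of_nonpos (by norm_num)] at hn; exact absurd hn (by norm_num)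

lemma smul_mem_seg (y : Fin 2 → ℝ) (t : ℝ) (h0 : 0 ≤ t) (h1 : t ≤ 1) :
    t • y ∈ segment ℝ 0 y := by
  rw [segment_eq_image]
  exact ⟨t, ⟨h0, h1⟩, by simp⟩

lemma key (v₁ v₂ : Fin 2 → ℤ) (h1 : IsPrim v₁)
    (hD : 2 ≤ v₁ 0 * v₂ 1 - v₁ 1 * v₂ 0) :
    ∃ (A w : Fin 2 → ℤ), IsPrim w ∧
      ({coeV A} : Set (Fin 2 → ℝ)) + segment ℝ 0 (coeV (2 • w)) ⊆
        segment ℝ 0 (coeV v₁) + segment ℝ 0 (coeV v₂) ∧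
      ({coeV A} : Set (Fin 2 → ℝ)) + segment ℝ 0 (coeV (2 • w)) ≠
        segment ℝ 0 (coeV v₁) + segment ℝ 0 (coeV v₂) := by
  obtain ⟨p, q, hpq⟩ := prim_coprime v₁ h1
  set D : ℤ := v₁ 0 * v₂ 1 - v₁ 1 * v₂ 0 with hDdef
  set a : ℤ := v₂ 0 * p + v₂ 1 * q with hadef
  set N : ℤ := ⌈(2 * (a:ℝ)) / (D : ℝ)⌉ with hNdef
  set x₀ : ℤ := N % 2 with hx0def
  set m : ℤ := N / 2 with hmdef
  have hx0 : 0 ≤ x₀ ∧ x₀ ≤ 1 := ⟨Int.emod_nonneg N (by norm_num), by omega⟩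
  have hNm : x₀ + 2 * m = N := by omega
  set u : Fin 2 → ℤ := ![-q, p] with hudef
  set w : Fin 2 → ℤ := fun i => m * v₁ i + u i with hwdef
  set A : Fin 2 → ℤ := fun i => x₀ * v₁ i with hAdef
  have hDr : (2:ℝ) ≤ (D:ℝ) := by exact_mod_cast hD
  have hDpos : (0:ℝ) < (D:ℝ) := by linarith
  have hDne : (D:ℝ) ≠ 0 := ne_of_gt hDpos
  have hpqr : (p:ℝ) * v₁ 0 + (q:ℝ) * v₁ 1 = 1 := by exact_mod_cast hpq
  have hv2r : ∀ i, (v₂ i : ℝ) = (a:ℝ) * v₁ i + (D:ℝ) * (u i : ℝ) := by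
    intro i
    simp only [hadef, hDdef]
    fin_cases i
    · simp [hudef]
      push_cast
      linear_combination (-(v₂ 0 : ℝ)) * hpqr
    · simp [hudef]
      push_cast
      linear_combination (-(v₂ 1 : ℝ)) * hpqr
  have hceil1 : (2 * (a:ℝ)) / D ≤ (N:ℝ) := Int.le_ceil _
  have hceil2 : (N:ℝ) < (2 * (a:ℝ)) / D + 1 := Int.ceil_lt_add_one _
  have hcan : ((2 * (a:ℝ)) / D) * D = 2 * a := div_mul_cancel₀ _ hDne
  have hNl : 2 * (a:ℝ) ≤ N * D := by nlinarith [mul_le_mul_of_nonneg_right hceil1 hDpos.le]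
  have hNu : (N:ℝ) * D ≤ 2 * a + D := by nlinarith [mul_lt_mul_of_pos_right hceil2 hDpos]
  set s' : ℝ := ((N:ℝ) * D - 2 * a) / D with hs'def
  set t' : ℝ := 2 / (D:ℝ) with ht'def
  have hs'0 : 0 ≤ s' := div_nonneg (by linarith) hDpos.le
  have hs'1 : s' ≤ 1 := by rw [hs'def, div_le_one hDpos]; linarith
  have ht'0 : 0 ≤ t' := div_nonneg (by norm_num) hDpos.le
  have ht'1 : t' ≤ 1 := by rw [ht'def, div_le_one hDpos]; linarith
  set Par : Set (Fin 2 → ℝ) := segment ℝ 0 (coeV v₁) + segment ℝ 0 (coeV v₂) with hPardef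
  have hmem : ∀ s t : ℝ, 0 ≤ s → s ≤ 1 → 0 ≤ t → t ≤ 1 →
      s • coeV v₁ + t • coeV v₂ ∈ Par := fun s t hs0 hs1 ht0 ht1 =>
    Set.add_mem_add (smul_mem_seg _ s hs0 hs1) (smul_mem_seg _ t ht0 ht1)
  have hconv : Convex ℝ Par := (convex_segment _ _).add (convex_segment _ _)
  have hNmr : (x₀:ℝ) + 2 * m = N := by exact_mod_cast hNm
  have hPA : coeV A ∈ Par := by
    have h : coeV A = (x₀:ℝ) • coeV v₁ + (0:ℝ) • coeV v₂ := by
      funext i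
      simp only [coeV, hAdef, Pi.add_apply, Pi.smul_apply, smul_eq_mul]
      push_cast
      ring
    rw [h]
    exact hmem _ _ (by exact_mod_cast hx0.1) (by exact_mod_cast hx0.2) le_rfl zero_le_one
  have hPB : coeV A + coeV (2 • w) ∈ Par := by
    have h : coeV A + coeV (2 • w) = s' • coeV v₁ + t' • coeV v₂ := by
      funext i
      simp only [coeV, hAdef, hwdef, Pi.add_apply, Pi.smul_apply, smul_eq_mul, two_nsmul]
      push_cast
      rw [hv2r i, hs'def, ht'def]
      field_simp
      linear_combination ((D:ℝ) * (v₁ i : ℝ)) * hNmr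
    rw [h]
    exact hmem _ _ hs'0 hs'1 ht'0 ht'1
  have ext : ∀ y ∈ ({coeV A} : Set (Fin 2 → ℝ)) + segment ℝ 0 (coeV (2 • w)),
      ∃ θ : ℝ, ∀ i, y i = coeV A i + θ * (2 * (w i : ℝ)) := by
    intro y hy
    rcases Set.mem_add.mp hy with ⟨a', ha', b, hb, hab⟩
    rcases ha' with rfl
    rw [segment_eq_image] at hb
    rcases hb with ⟨θ, _, rfl⟩
    refine ⟨θ, fun i => ?_⟩
    rw [← hab]
    simp [coeV, hwdef]
    try ring
  refine ⟨A, w, ?_, ?_, ?_⟩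
  · apply prim_of_comb _ (-v₁ 1) (v₁ 0)
    simp only [hwdef, hudef]
    simp
    linear_combination hpq
  · intro x hx
    rcases Set.mem_add.mp hx with ⟨a', ha', b, hb, hab⟩
    rcases ha' with rfl
    rw [segment_eq_image] at hb
    rcases hb with ⟨θ, ⟨hθ0, hθ1⟩, rfl⟩
    have hx' : coeV A + ((1 - θ) • (0:Fin 2 → ℝ) + θ • coeV (2 • w)) =
        (1 - θ) • coeV A + θ • (coeV A + coeV (2 • w)) := by
      funext i; simp; ring
    rw [← hab, hx']
    exact hconv hPA hPB (by linarith) (by linarith) (by ring)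
  · intro heq
    have hv1P : coeV v₁ ∈ Par := by
      have h : coeV v₁ = (1:ℝ) • coeV v₁ + (0:ℝ) • coeV v₂ := by funext i; simp
      rw [h]; exact hmem 1 0 zero_le_one le_rfl le_rfl zero_le_one
    have hv2P : coeV v₂ ∈ Par := by
      have h : coeV v₂ = (0:ℝ) • coeV v₁ + (1:ℝ) • coeV v₂ := by funext i; simp
      rw [h]; exact hmem 0 1 le_rfl zero_le_one zero_le_one le_rfl
    have h0P : (0 : Fin 2 → ℝ) ∈ Par := by
      have h : (0 : Fin 2 → ℝ) = (0:ℝ) • coeV v₁ + (0:ℝ) • coeV v₂ := by funext i; simp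
      rw [h]; exact hmem 0 0 le_rfl zero_le_one le_rfl zero_le_one
    rw [← heq] at hv1P hv2P h0P
    obtain ⟨θ₁, hθ₁⟩ := ext _ hv1P
    obtain ⟨θ₂, hθ₂⟩ := ext _ hv2P
    obtain ⟨θ₀, hθ₀⟩ := ext _ h0P
    have h0i : ∀ i, (0:ℝ) = coeV A i + θ₀ * (2 * (w i : ℝ)) := by
      intro i; have := hθ₀ i; simpa using this
    have e10 : (v₁ 0 : ℝ) = (θ₁ - θ₀) * (2 * (w 0 : ℝ)) := by
      have h1 := hθ₁ 0; have h2 := h0i 0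
      simp only [coeV] at h1 h2 ⊢
      linear_combination h1 - h2
    have e11 : (v₁ 1 : ℝ) = (θ₁ - θ₀) * (2 * (w 1 : ℝ)) := by
      have h1 := hθ₁ 1; have h2 := h0i 1
      simp only [coeV] at h1 h2 ⊢
      linear_combination h1 - h2
    have e20 : (v₂ 0 : ℝ) = (θ₂ - θ₀) * (2 * (w 0 : ℝ)) := by
      have h1 := hθ₂ 0; have h2 := h0i 0
      simp only [coeV] at h1 h2 ⊢
      linear_combination h1 - h2
    have e21 : (v₂ 1 : ℝ) = (θ₂ - θ₀) * (2 * (w 1 : ℝ)) := by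
      have h1 := hθ₂ 1; have h2 := h0i 1
      simp only [coeV] at h1 h2 ⊢
      linear_combination h1 - h2
    have hz : (v₁ 0 : ℝ) * (v₂ 1 : ℝ) - (v₁ 1 : ℝ) * (v₂ 0 : ℝ) = 0 := by
      rw [e10, e11, e20, e21]; ring
    have hD2 : (2:ℝ) ≤ (v₁ 0 : ℝ) * (v₂ 1 : ℝ) - (v₁ 1 : ℝ) * (v₂ 0 : ℝ) := by
      rw [hDdef] at hDr; push_cast at hDr; linarith
    linarith

/-- If `v₁, v₂` are primitive vectors in `ℤ²` spanning a parallelogram of area at least 2,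
then the parallelogram `Π = [0,v₁] + [0,v₂]` strictly contains a lattice segment of lattice
length 2. -/
theorem stmt3 (v₁ v₂ : Fin 2 → ℤ) (h1 : IsPrim v₁) (h2 : IsPrim v₂)
    (hdet : 2 ≤ |v₁ 0 * v₂ 1 - v₁ 1 * v₂ 0|) :
    ∃ (A w : Fin 2 → ℤ), IsPrim w ∧
      ({coeV A} : Set (Fin 2 → ℝ)) + segment ℝ 0 (coeV (2 • w)) ⊆
        segment ℝ 0 (coeV v₁) + segment ℝ 0 (coeV v₂) ∧
      ({coeV A} : Set (Fin 2 → ℝ)) + segment ℝ 0 (coeV (2 • w)) ≠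
        segment ℝ 0 (coeV v₁) + segment ℝ 0 (coeV v₂) := by
  rcases abs_cases (v₁ 0 * v₂ 1 - v₁ 1 * v₂ 0) with ⟨habs, _⟩ | ⟨habs, _⟩
  · exact key v₁ v₂ h1 (by omega)
  · have hswap : v₂ 0 * v₁ 1 - v₂ 1 * v₁ 0 = -(v₁ 0 * v₂ 1 - v₁ 1 * v₂ 0) := by ring
    obtain ⟨A, w, hw, hsub, hne⟩ := key v₂ v₁ h2 (by omega)
    rw [add_comm (segment ℝ 0 (coeV v₂)) (segment ℝ 0 (coeV v₁))] at hsub hne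
    exact ⟨A, w, hw, hsub, hne⟩
end

section
/- Let v₃ = (s,t,u) ∈ ℤ³ with 0 ≤ s ≤ t < u, u ≥ 3, and s ≥ 1. Then the parallelepiped Π = [0,e₁] + [0,e₂] + [0, v₃] strictly contains a zonotope that is a Minkowski sum of three nontrivial lattice segments, one of which has lattice length 2; concretely, one of the following holds: (a) if s ≤ u/2 and t ≤ u/2 then (1,1,0) + 2[0,(0,0,1)] + [0,(s−1,t−1,u−2)] ⊆ Π; (b) if s > u/2 and t > u/2 then 2[0,(1,1,1)] + [0,(s−1,t−1,u−2)] ⊆ Π; (c) if s ≤ u/2 and t > u/2 then (1,0,0) + 2[0,(0,1,1)] + [0,(s−1,t−1,u−2)] ⊆ Π. -/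
open Pointwise

/-- The parallelepiped `Π = [0,e₁] + [0,e₂] + [0,(s,t,u)]`. -/
def Pi3 (s t u : ℤ) : Set (Fin 3 → ℝ) :=
  segment ℝ 0 (coeV ![1, 0, 0]) + segment ℝ 0 (coeV ![0, 1, 0]) + segment ℝ 0 (coeV ![s, t, u])

/-- `(1,1,0) + 2[0,(0,0,1)] + [0,(s-1,t-1,u-2)]`. -/
def Za (s t u : ℤ) : Set (Fin 3 → ℝ) :=
  ({coeV ![1, 1, 0]} : Set (Fin 3 → ℝ)) + segment ℝ 0 (coeV ![0, 0, 2]) +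
    segment ℝ 0 (coeV ![s - 1, t - 1, u - 2])

/-- `2[0,(1,1,1)] + [0,(s-1,t-1,u-2)]`. -/
def Zb (s t u : ℤ) : Set (Fin 3 → ℝ) :=
  segment ℝ 0 (coeV ![2, 2, 2]) + segment ℝ 0 (coeV ![s - 1, t - 1, u - 2])

/-- `(1,0,0) + 2[0,(0,1,1)] + [0,(s-1,t-1,u-2)]`. -/
def Zc (s t u : ℤ) : Set (Fin 3 → ℝ) :=
  ({coeV ![1, 0, 0]} : Set (Fin 3 → ℝ)) + segment ℝ 0 (coeV ![0, 2, 2]) +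
    segment ℝ 0 (coeV ![s - 1, t - 1, u - 2])

lemma seg_iff (v x : Fin 3 → ℝ) : x ∈ segment ℝ 0 v ↔ ∃ θ : ℝ, 0 ≤ θ ∧ θ ≤ 1 ∧ x = θ • v := by
  rw [segment_eq_image]
  constructor
  · rintro ⟨θ, ⟨h0, h1⟩, rfl⟩
    exact ⟨θ, h0, h1, by simp⟩
  · rintro ⟨θ, h0, h1, rfl⟩
    exact ⟨θ, ⟨h0, h1⟩, by simp⟩

lemma mem_Pi3_of (s t u : ℤ) (x : Fin 3 → ℝ) (a b c : ℝ)
    (ha0 : 0 ≤ a) (ha1 : a ≤ 1) (hb0 : 0 ≤ b) (hb1 : b ≤ 1) (hc0 : 0 ≤ c) (hc1 : c ≤ 1)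
    (h0 : x 0 = a + c * s) (h1 : x 1 = b + c * t) (h2 : x 2 = c * u) :
    x ∈ Pi3 s t u := by
  have hx : x = a • coeV ![1, 0, 0] + b • coeV ![0, 1, 0] + c • coeV ![(s:ℤ), t, u] := by
    funext i
    fin_cases i <;> simp [coeV] <;> linarith
  rw [hx]
  exact Set.add_mem_add
    (Set.add_mem_add ((seg_iff _ _).2 ⟨a, ha0, ha1, rfl⟩) ((seg_iff _ _).2 ⟨b, hb0, hb1, rfl⟩))
    ((seg_iff _ _).2 ⟨c, hc0, hc1, rfl⟩)

lemma mem_Za_elim {s t u : ℤ} {x : Fin 3 → ℝ} (hx : x ∈ Za s t u) :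
    ∃ θ φ : ℝ, 0 ≤ θ ∧ θ ≤ 1 ∧ 0 ≤ φ ∧ φ ≤ 1 ∧
      x 0 = 1 + φ * (s - 1) ∧ x 1 = 1 + φ * (t - 1) ∧ x 2 = 2 * θ + φ * (u - 2) := by
  obtain ⟨y, hy, z, hz, rfl⟩ := hx
  obtain ⟨y1, hy1, y2, hy2, rfl⟩ := hy
  rw [Set.mem_singleton_iff] at hy1
  subst hy1
  obtain ⟨θ, hθ0, hθ1, rfl⟩ := (seg_iff _ _).1 hy2
  obtain ⟨φ, hφ0, hφ1, rfl⟩ := (seg_iff _ _).1 hz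
  exact ⟨θ, φ, hθ0, hθ1, hφ0, hφ1, by simp [coeV]; try ring, by simp [coeV]; try ring,
    by simp [coeV]; try ring⟩

lemma mem_Zb_elim {s t u : ℤ} {x : Fin 3 → ℝ} (hx : x ∈ Zb s t u) :
    ∃ θ φ : ℝ, 0 ≤ θ ∧ θ ≤ 1 ∧ 0 ≤ φ ∧ φ ≤ 1 ∧
      x 0 = 2 * θ + φ * (s - 1) ∧ x 1 = 2 * θ + φ * (t - 1) ∧ x 2 = 2 * θ + φ * (u - 2) := by
  obtain ⟨y, hy, z, hz, rfl⟩ := hx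
  obtain ⟨θ, hθ0, hθ1, rfl⟩ := (seg_iff _ _).1 hy
  obtain ⟨φ, hφ0, hφ1, rfl⟩ := (seg_iff _ _).1 hz
  exact ⟨θ, φ, hθ0, hθ1, hφ0, hφ1, by simp [coeV]; try ring, by simp [coeV]; try ring,
    by simp [coeV]; try ring⟩

lemma mem_Zc_elim {s t u : ℤ} {x : Fin 3 → ℝ} (hx : x ∈ Zc s t u) :
    ∃ θ φ : ℝ, 0 ≤ θ ∧ θ ≤ 1 ∧ 0 ≤ φ ∧ φ ≤ 1 ∧
      x 0 = 1 + φ * (s - 1) ∧ x 1 = 2 * θ + φ * (t - 1) ∧ x 2 = 2 * θ + φ * (u - 2) := by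
  obtain ⟨y, hy, z, hz, rfl⟩ := hx
  obtain ⟨y1, hy1, y2, hy2, rfl⟩ := hy
  rw [Set.mem_singleton_iff] at hy1
  subst hy1
  obtain ⟨θ, hθ0, hθ1, rfl⟩ := (seg_iff _ _).1 hy2
  obtain ⟨φ, hφ0, hφ1, rfl⟩ := (seg_iff _ _).1 hz
  exact ⟨θ, φ, hθ0, hθ1, hφ0, hφ1, by simp [coeV]; try ring, by simp [coeV]; try ring,
    by simp [coeV]; try ring⟩

set_option maxHeartbeats 1000000 in
/-- For `v₃ = (s,t,u)` with `1 ≤ s ≤ t < u` and `u ≥ 3`, the parallelepiped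
`Π = [0,e₁] + [0,e₂] + [0,v₃]` strictly contains a zonotope which is a Minkowski sum of
three nontrivial lattice segments, one of lattice length 2, as given by the three cases. -/
theorem stmt7 (s t u : ℤ) (hs : 1 ≤ s) (hst : s ≤ t) (htu : t < u) (hu : 3 ≤ u) :
    (2 * s ≤ u ∧ 2 * t ≤ u → Za s t u ⊆ Pi3 s t u ∧ Za s t u ≠ Pi3 s t u) ∧
    (u < 2 * s ∧ u < 2 * t → Zb s t u ⊆ Pi3 s t u ∧ Zb s t u ≠ Pi3 s t u) ∧
    (2 * s ≤ u ∧ u < 2 * t → Zc s t u ⊆ Pi3 s t u ∧ Zc s t u ≠ Pi3 s t u) := by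
  have hsR : (1:ℝ) ≤ (s:ℝ) := by exact_mod_cast hs
  have hstR : (s:ℝ) ≤ (t:ℝ) := by exact_mod_cast hst
  have htuR : (t:ℝ) < (u:ℝ) := by exact_mod_cast htu
  have huR : (3:ℝ) ≤ (u:ℝ) := by exact_mod_cast hu
  have hU0 : (0:ℝ) < (u:ℝ) := by linarith
  -- the zero point is in Pi3
  have h0Pi : (0 : Fin 3 → ℝ) ∈ Pi3 s t u :=
    mem_Pi3_of s t u 0 0 0 0 le_rfl zero_le_one le_rfl zero_le_one le_rfl zero_le_one
      (by norm_num) (by norm_num) (by norm_num)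
  -- the point e₁ is in Pi3
  have he1Pi : (coeV ![1, 0, 0]) ∈ Pi3 s t u :=
    mem_Pi3_of s t u _ 1 0 0 zero_le_one le_rfl le_rfl zero_le_one le_rfl zero_le_one
      (by simp [coeV]) (by simp [coeV]) (by simp [coeV])
  refine ⟨fun ⟨hcs, hct⟩ => ?_, fun ⟨hcs, hct⟩ => ?_, fun ⟨hcs, hct⟩ => ?_⟩
  · have hcsR : 2 * (s:ℝ) ≤ (u:ℝ) := by exact_mod_cast hcs
    have hctR : 2 * (t:ℝ) ≤ (u:ℝ) := by exact_mod_cast hct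
    constructor
    · intro x hx
      obtain ⟨θ, φ, hθ0, hθ1, hφ0, hφ1, h0, h1, h2⟩ := mem_Za_elim hx
      set c : ℝ := (2 * θ + φ * ((u:ℝ) - 2)) / u with hc
      have hcu : c * u = 2 * θ + φ * ((u:ℝ) - 2) := by
        rw [hc]
        field_simp
      refine mem_Pi3_of s t u x (1 + φ * ((s:ℝ) - 1) - c * s) (1 + φ * ((t:ℝ) - 1) - c * t) c
        ?_ ?_ ?_ ?_ ?_ ?_ (by rw [h0]; ring) (by rw [h1]; ring) (by rw [h2, hcu])
      · nlinarith [mul_nonneg (by linarith : (0:ℝ) ≤ (u:ℝ) - 2 * s) (by linarith : (0:ℝ) ≤ 1 - φ),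
          mul_nonneg (by linarith : (0:ℝ) ≤ (s:ℝ)) (by linarith : (0:ℝ) ≤ 1 - θ), hU0]
      · nlinarith [mul_nonneg (by linarith : (0:ℝ) ≤ (s:ℝ)) hθ0,
          mul_nonneg (by linarith : (0:ℝ) ≤ (u:ℝ) - 2 * s) hφ0, hU0]
      · nlinarith [mul_nonneg (by linarith : (0:ℝ) ≤ (u:ℝ) - 2 * t) (by linarith : (0:ℝ) ≤ 1 - φ),
          mul_nonneg (by linarith : (0:ℝ) ≤ (t:ℝ)) (by linarith : (0:ℝ) ≤ 1 - θ), hU0]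
      · nlinarith [mul_nonneg (by linarith : (0:ℝ) ≤ (t:ℝ)) hθ0,
          mul_nonneg (by linarith : (0:ℝ) ≤ (u:ℝ) - 2 * t) hφ0, hU0]
      · rw [hc]
        apply div_nonneg _ (le_of_lt hU0)
        nlinarith [mul_nonneg hφ0 (by linarith : (0:ℝ) ≤ (u:ℝ) - 2)]
      · rw [hc, div_le_one hU0]
        nlinarith [mul_nonneg hφ0 (by linarith : (0:ℝ) ≤ (u:ℝ) - 2)]
    · intro h
      have h0Za : (0 : Fin 3 → ℝ) ∈ Za s t u := h ▸ h0Pi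
      obtain ⟨θ, φ, hθ0, hθ1, hφ0, hφ1, h0, h1, h2⟩ := mem_Za_elim h0Za
      simp only [Pi.zero_apply] at h0
      nlinarith [mul_nonneg hφ0 (by linarith : (0:ℝ) ≤ (s:ℝ) - 1)]
  · have hcsR : (u:ℝ) < 2 * (s:ℝ) := by exact_mod_cast hcs
    have hctR : (u:ℝ) < 2 * (t:ℝ) := by exact_mod_cast hct
    constructor
    · intro x hx
      obtain ⟨θ, φ, hθ0, hθ1, hφ0, hφ1, h0, h1, h2⟩ := mem_Zb_elim hx
      set c : ℝ := (2 * θ + φ * ((u:ℝ) - 2)) / u with hc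
      have hcu : c * u = 2 * θ + φ * ((u:ℝ) - 2) := by
        rw [hc]
        field_simp
      refine mem_Pi3_of s t u x (2 * θ + φ * ((s:ℝ) - 1) - c * s) (2 * θ + φ * ((t:ℝ) - 1) - c * t) c
        ?_ ?_ ?_ ?_ ?_ ?_ (by rw [h0]; ring) (by rw [h1]; ring) (by rw [h2, hcu])
      · nlinarith [mul_nonneg hθ0 (by linarith : (0:ℝ) ≤ (u:ℝ) - s),
          mul_nonneg hφ0 (by linarith : (0:ℝ) ≤ 2 * (s:ℝ) - u), hU0]
      · nlinarith [mul_nonneg (by linarith : (0:ℝ) ≤ 1 - θ) (by linarith : (0:ℝ) ≤ (u:ℝ) - s),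
          mul_nonneg (by linarith : (0:ℝ) ≤ 1 - φ) (by linarith : (0:ℝ) ≤ 2 * (s:ℝ) - u), hU0]
      · nlinarith [mul_nonneg hθ0 (by linarith : (0:ℝ) ≤ (u:ℝ) - t),
          mul_nonneg hφ0 (by linarith : (0:ℝ) ≤ 2 * (t:ℝ) - u), hU0]
      · nlinarith [mul_nonneg (by linarith : (0:ℝ) ≤ 1 - θ) (by linarith : (0:ℝ) ≤ (u:ℝ) - t),
          mul_nonneg (by linarith : (0:ℝ) ≤ 1 - φ) (by linarith : (0:ℝ) ≤ 2 * (t:ℝ) - u), hU0]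
      · rw [hc]
        apply div_nonneg _ (le_of_lt hU0)
        nlinarith [mul_nonneg hφ0 (by linarith : (0:ℝ) ≤ (u:ℝ) - 2)]
      · rw [hc, div_le_one hU0]
        nlinarith [mul_nonneg hφ0 (by linarith : (0:ℝ) ≤ (u:ℝ) - 2)]
    · intro h
      have he1Zb : (coeV ![1, 0, 0]) ∈ Zb s t u := h ▸ he1Pi
      obtain ⟨θ, φ, hθ0, hθ1, hφ0, hφ1, h0, h1, h2⟩ := mem_Zb_elim he1Zb
      simp [coeV] at h0 h1 h2
      nlinarith [mul_nonneg hφ0 (by linarith : (0:ℝ) ≤ (t:ℝ) - 1),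
        mul_nonneg hφ0 (by linarith : (0:ℝ) ≤ (u:ℝ) - 2),
        mul_nonneg hφ0 (by linarith : (0:ℝ) ≤ (s:ℝ) - 1)]
  · have hcsR : 2 * (s:ℝ) ≤ (u:ℝ) := by exact_mod_cast hcs
    have hctR : (u:ℝ) < 2 * (t:ℝ) := by exact_mod_cast hct
    constructor
    · intro x hx
      obtain ⟨θ, φ, hθ0, hθ1, hφ0, hφ1, h0, h1, h2⟩ := mem_Zc_elim hx
      set c : ℝ := (2 * θ + φ * ((u:ℝ) - 2)) / u with hc
      have hcu : c * u = 2 * θ + φ * ((u:ℝ) - 2) := by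
        rw [hc]
        field_simp
      refine mem_Pi3_of s t u x (1 + φ * ((s:ℝ) - 1) - c * s) (2 * θ + φ * ((t:ℝ) - 1) - c * t) c
        ?_ ?_ ?_ ?_ ?_ ?_ (by rw [h0]; ring) (by rw [h1]; ring) (by rw [h2, hcu])
      · nlinarith [mul_nonneg (by linarith : (0:ℝ) ≤ (u:ℝ) - 2 * s) (by linarith : (0:ℝ) ≤ 1 - φ),
          mul_nonneg (by linarith : (0:ℝ) ≤ (s:ℝ)) (by linarith : (0:ℝ) ≤ 1 - θ), hU0]
      · nlinarith [mul_nonneg (by linarith : (0:ℝ) ≤ (s:ℝ)) hθ0,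
          mul_nonneg (by linarith : (0:ℝ) ≤ (u:ℝ) - 2 * s) hφ0, hU0]
      · nlinarith [mul_nonneg hθ0 (by linarith : (0:ℝ) ≤ (u:ℝ) - t),
          mul_nonneg hφ0 (by linarith : (0:ℝ) ≤ 2 * (t:ℝ) - u), hU0]
      · nlinarith [mul_nonneg (by linarith : (0:ℝ) ≤ 1 - θ) (by linarith : (0:ℝ) ≤ (u:ℝ) - t),
          mul_nonneg (by linarith : (0:ℝ) ≤ 1 - φ) (by linarith : (0:ℝ) ≤ 2 * (t:ℝ) - u), hU0]
      · rw [hc]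
        apply div_nonneg _ (le_of_lt hU0)
        nlinarith [mul_nonneg hφ0 (by linarith : (0:ℝ) ≤ (u:ℝ) - 2)]
      · rw [hc, div_le_one hU0]
        nlinarith [mul_nonneg hφ0 (by linarith : (0:ℝ) ≤ (u:ℝ) - 2)]
    · intro h
      have h0Zc : (0 : Fin 3 → ℝ) ∈ Zc s t u := h ▸ h0Pi
      obtain ⟨θ, φ, hθ0, hθ1, hφ0, hφ1, h0, h1, h2⟩ := mem_Zc_elim h0Zc
      simp only [Pi.zero_apply] at h0
      nlinarith [mul_nonneg hφ0 (by linarith : (0:ℝ) ≤ (s:ℝ) - 1)]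
end

section
/- Let P ⊂ ℝ^n be a lattice polytope and Z a smallest maximal Minkowski decomposition in P, written as a sum of primitive segments with distinct primitive direction vectors v₁, …, v_m (each possibly with multiplicity). Then m ≤ 2^n − 1. -/
set_option maxHeartbeats 1000000


open Pointwise

/-- The zonotope with base lattice point `A` obtained as the Minkowski sum of the
lattice segments `[0, v i]`. -/
def Zono {n L : ℕ} (A : Fin n → ℤ) (v : Fin L → Fin n → ℤ) : Set (Fin n → ℝ) :=
  ({coeV A} : Set (Fin n → ℝ)) + ∑ i, segment ℝ 0 (coeV (v i))

/-- `P` contains (a translate of) a Minkowski sum of `L` primitive lattice segments. -/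
def IsDecomp {n : ℕ} (P : Set (Fin n → ℝ)) (L : ℕ) : Prop :=
  ∃ (A : Fin n → ℤ) (v : Fin L → Fin n → ℤ), (∀ i, IsPrim (v i)) ∧ Zono A v ⊆ P

/-- `L` is the Minkowski length of `P`. -/
def MinkLen {n : ℕ} (P : Set (Fin n → ℝ)) (L : ℕ) : Prop :=
  IsDecomp P L ∧ ∀ M, IsDecomp P M → M ≤ L

/-- `P` is a lattice polytope: the convex hull of a nonempty finite set of lattice points. -/
def IsLatticePolytope {n : ℕ} (P : Set (Fin n → ℝ)) : Prop :=
  ∃ S : Finset (Fin n → ℤ), S.Nonempty ∧ P = convexHull ℝ (coeV '' ↑S)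

/-- `Zono A v` is a smallest maximal Minkowski decomposition in `P`: it realizes the
Minkowski length of `P` and is minimal with respect to inclusion among all maximal
decompositions in `P`. -/
def IsSmallestMax {n L : ℕ} (P : Set (Fin n → ℝ)) (A : Fin n → ℤ)
    (v : Fin L → Fin n → ℤ) : Prop :=
  (∀ i, IsPrim (v i)) ∧ Zono A v ⊆ P ∧ MinkLen P L ∧
    ∀ (B : Fin n → ℤ) (w : Fin L → Fin n → ℤ), (∀ i, IsPrim (w i)) →
      Zono B w ⊆ P → Zono B w ⊆ Zono A v → Zono B w = Zono A v

/-- The zonotope `A + c₁[0,v₁] + ⋯ + c_m[0,v_m]` with multiplicities `c i`. -/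
def ZonoM {n m : ℕ} (A : Fin n → ℤ) (c : Fin m → ℕ) (v : Fin m → Fin n → ℤ) :
    Set (Fin n → ℝ) :=
  ({coeV A} : Set (Fin n → ℝ)) + ∑ i, (c i : ℝ) • segment ℝ 0 (coeV (v i))



section Aux

variable {E : Type*} [AddCommGroup E] [Module ℝ E]

lemma seg_img (u : E) : segment ℝ 0 u = (fun θ : ℝ => θ • u) '' Set.Icc 0 1 := by
  rw [segment_eq_image]; simp

lemma seg_smul (t : ℝ) (w : E) : t • segment ℝ 0 w = segment ℝ 0 (t • w) := by
  rw [seg_img, seg_img, ← Set.image_smul, Set.image_image]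
  apply Set.image_congr'
  intro θ; rw [smul_comm]

lemma nsmul_real (s : Set E) (hs : Convex ℝ s) (hne : s.Nonempty) (k : ℕ) :
    (k : ℝ) • s = k • s := by
  induction k with
  | zero => simpa using Set.zero_smul_set hne
  | succ k ih =>
    push_cast
    rw [Convex.add_smul hs (by positivity) zero_le_one, one_smul, ih, succ_nsmul]

lemma seg_nsmul (k : ℕ) (w : E) : k • segment ℝ 0 w = segment ℝ 0 ((k : ℝ) • w) := by
  rw [← nsmul_real _ (convex_segment _ _) ⟨0, left_mem_segment _ _ _⟩, seg_smul]

lemma seg_add_subset (x y : E) :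
    segment ℝ 0 (x + y) ⊆ segment ℝ 0 x + segment ℝ 0 y := by
  rw [seg_img, seg_img, seg_img]
  rintro z ⟨θ, hθ, rfl⟩
  dsimp only
  rw [smul_add]
  exact Set.add_mem_add ⟨θ, hθ, rfl⟩ ⟨θ, hθ, rfl⟩

lemma mem_finsetSum {ι M : Type*} [AddCommMonoid M] (t : Finset ι) (S : ι → Set M) (z : M) :
    z ∈ ∑ k ∈ t, S k ↔ ∃ r : ι → M, (∀ k ∈ t, r k ∈ S k) ∧ z = ∑ k ∈ t, r k := by
  classical
  revert z
  induction t using Finset.induction_on with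
  | empty => intro z; simp [eq_comm, Set.mem_zero]
  | @insert a s ha ih =>
    intro z
    rw [Finset.sum_insert ha, Set.mem_add]
    constructor
    · rintro ⟨x, hx, y, hy, rfl⟩
      obtain ⟨r, hr, rfl⟩ := (ih y).mp hy
      refine ⟨Function.update r a x, ?_, ?_⟩
      · intro k hk
        rcases Finset.mem_insert.mp hk with rfl | hks
        · simpa using hx
        · rw [Function.update_of_ne (by rintro rfl; exact ha hks)]
          exact hr k hks
      · rw [Finset.sum_insert ha, Function.update_self]
        congr 1
        refine Finset.sum_congr rfl fun k hk => ?_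
        rw [Function.update_of_ne (by rintro rfl; exact ha hk)]
    · rintro ⟨r, hr, rfl⟩
      exact ⟨r a, hr a (Finset.mem_insert_self _ _), ∑ k ∈ s, r k,
        (ih _).mpr ⟨r, fun k hk => hr k (Finset.mem_insert_of_mem hk), rfl⟩,
        (Finset.sum_insert ha).symm⟩


lemma rep {α M : Type*} [AddCommMonoid M] (f : α → M) :
    ∀ (m : ℕ) (c : Fin m → ℕ) (v : Fin m → α),
    ∃ w : Fin (∑ i, c i) → α, (∀ k, ∃ i, w k = v i) ∧
      ∑ k, f (w k) = ∑ i, c i • f (v i) := by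
  intro m
  induction m with
  | zero =>
    intro c v
    have h : (∑ i, c i) = 0 := rfl
    refine ⟨fun k => (Fin.cast h k).elim0, fun k => (Fin.cast h k).elim0, ?_⟩
    rw [Finset.sum_eq_zero (fun k _ => (Fin.cast h k).elim0)]
    simp
  | succ m ih =>
    intro c v
    obtain ⟨w', h1, h2⟩ := ih (fun i => c i.succ) (fun i => v i.succ)
    have hs : (∑ i, c i) = c 0 + ∑ i : Fin m, c i.succ := Fin.sum_univ_succ _
    refine ⟨fun k => Fin.append (fun _ : Fin (c 0) => v 0) w' (Fin.cast hs k), ?_, ?_⟩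
    · intro k
      refine Fin.addCases (motive := fun k' =>
        ∃ i, Fin.append (fun _ : Fin (c 0) => v 0) w' k' = v i) ?_ ?_ (Fin.cast hs k)
      · intro i; exact ⟨0, by rw [Fin.append_left]⟩
      · intro i
        obtain ⟨i0, e⟩ := h1 i
        exact ⟨i0.succ, by rw [Fin.append_right]; exact e⟩
    · calc ∑ k, f (Fin.append (fun _ : Fin (c 0) => v 0) w' (Fin.cast hs k))
          = ∑ k' : Fin (c 0 + ∑ i : Fin m, c i.succ),
              f (Fin.append (fun _ : Fin (c 0) => v 0) w' k') :=
            Fintype.sum_equiv (finCongr hs) _ _ (fun k => rfl)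
        _ = (∑ _k : Fin (c 0), f (v 0)) + ∑ k : Fin (∑ i : Fin m, c i.succ), f (w' k) := by
            rw [Fin.sum_univ_add]
            simp [Fin.append_left, Fin.append_right]
        _ = ∑ i, c i • f (v i) := by
            rw [Finset.sum_const, Finset.card_univ, Fintype.card_fin, h2,
              Fin.sum_univ_succ (fun i => c i • f (v i))]

lemma bezout {ι : Type*} [DecidableEq ι] (t : Finset ι) (f : ι → ℤ) :
    ∃ g : ι → ℤ, ∑ a ∈ t, g a * f a = t.gcd f := by
  induction t using Finset.induction_on with
  | empty => exact ⟨0, by simp⟩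
  | @insert a s ha ih =>
    obtain ⟨g, hg⟩ := ih
    refine ⟨Function.update (fun x => (f a).gcdB (s.gcd f) * g x) a ((f a).gcdA (s.gcd f)), ?_⟩
    rw [Finset.sum_insert ha, Function.update_self, Finset.gcd_insert]
    have h1 : ∑ x ∈ s, Function.update (fun x => (f a).gcdB (s.gcd f) * g x) a
        ((f a).gcdA (s.gcd f)) x * f x = (f a).gcdB (s.gcd f) * ∑ x ∈ s, g x * f x := by
      rw [Finset.mul_sum]
      refine Finset.sum_congr rfl fun x hx => ?_
      rw [Function.update_of_ne (by rintro rfl; exact ha hx)]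
      ring
    rw [h1, hg, ← Int.coe_gcd, Int.gcd_eq_gcd_ab]
    ring

lemma prim_cross {n : ℕ} {u w : Fin n → ℤ} (hu : IsPrim u) (hw : IsPrim w)
    (h : ∀ a b, u a * w b = u b * w a) : w = u ∨ w = -u := by
  obtain ⟨t, ht⟩ := bezout Finset.univ u
  rw [hu] at ht
  set d := ∑ a, t a * w a with hd
  have hwd : w = fun b => d * u b := by
    funext b
    have e1 : w b = ∑ a, t a * (u a * w b) := by
      have : (∑ a, t a * (u a * w b)) = (∑ a, t a * u a) * w b := by
        rw [Finset.sum_mul]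
        exact Finset.sum_congr rfl fun a _ => by ring
      rw [this, ht, one_mul]
    have e2 : (∑ a, t a * (u a * w b)) = ∑ a, t a * (u b * w a) :=
      Finset.sum_congr rfl fun a _ => by rw [h a b]
    have e3 : (∑ a, t a * (u b * w a)) = d * u b := by
      rw [hd, Finset.sum_mul]
      exact Finset.sum_congr rfl fun a _ => by ring
    rw [e1, e2, e3]
  have hgw : Finset.univ.gcd w = normalize d * Finset.univ.gcd u := by
    rw [hwd]; exact Finset.gcd_mul_left
  rw [hu, hw, mul_one] at hgw
  have habs : |d| = 1 := by rw [Int.abs_eq_normalize, ← hgw]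
  rcases (abs_eq (by norm_num : (0:ℤ) ≤ 1)).mp habs with h1 | h1
  · left; rw [hwd]; funext b; rw [h1, one_mul]
  · right; rw [hwd]; funext b; rw [h1]; simp


lemma seg_bound {n : ℕ} (φ : (Fin n → ℝ) →ₗ[ℝ] ℝ) (t : ℝ) (ht : 0 ≤ t)
    (x z : Fin n → ℝ) (hz : z ∈ t • segment ℝ 0 x) : φ z ≤ t * max 0 (φ x) := by
  rw [seg_smul, segment_eq_image] at hz
  obtain ⟨θ, hθ, rfl⟩ := hz
  simp only [smul_zero, zero_add] at *
  rw [map_smul, map_smul, smul_eq_mul, smul_eq_mul]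
  rcases le_total (φ x) 0 with h | h
  · rw [max_eq_left h]
    have : θ * (t * φ x) ≤ 0 := by
      apply mul_nonpos_of_nonneg_of_nonpos hθ.1
      exact mul_nonpos_of_nonneg_of_nonpos ht h
    linarith [this]
  · rw [max_eq_right h]
    nlinarith [hθ.1, hθ.2, mul_nonneg ht h]

lemma aux_pt {n m : ℕ} (A : Fin n → ℤ) (c : Fin m → ℕ) (v : Fin m → Fin n → ℤ)
    (c' : Fin (m + 1) → ℕ) (v' : Fin (m + 1) → Fin n → ℤ) (e : Fin m → ℕ)
    (i j : Fin m) (hij : i ≠ j)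
    (hele : ∀ k, e k ≤ c k)
    (hei : e i = 1) (hej : e j = 1) (he0 : ∀ k, k ≠ i → k ≠ j → e k = 0)
    (hcc : ∀ k : Fin m, c' k.castSucc = c k - e k)
    (hvv : ∀ k : Fin m, v' k.castSucc = v k)
    (φ : (Fin n → ℝ) →ₗ[ℝ] ℝ)
    (hlast : φ (coeV (v' (Fin.last m))) = 0)
    (hx : 0 < φ (coeV (v i))) (hy : φ (coeV (v j)) < 0)
    (Heq : ZonoM A c' v' = ZonoM A c v) : False := by
  classical
  set M : Fin m → ℝ := fun k => (c k : ℝ) * max 0 (φ (coeV (v k))) with hM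
  set q : Fin m → (Fin n → ℝ) :=
    fun k => if 0 ≤ φ (coeV (v k)) then (c k : ℝ) • coeV (v k) else 0 with hq
  have hqmem : ∀ k, q k ∈ (c k : ℝ) • segment ℝ 0 (coeV (v k)) := by
    intro k
    rw [hq]
    dsimp only
    split_ifs
    · exact Set.smul_mem_smul_set (right_mem_segment ℝ 0 _)
    · have := Set.smul_mem_smul_set (a := (c k : ℝ)) (left_mem_segment ℝ (0 : Fin n → ℝ) (coeV (v k)))
      rwa [smul_zero] at this
  have hqφ : ∀ k, φ (q k) = M k := by
    intro k
    rw [hq, hM]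
    dsimp only
    split_ifs with h
    · rw [map_smul, smul_eq_mul, max_eq_right h]
    · rw [map_zero, max_eq_left (le_of_not_ge h), mul_zero]
  -- the maximizing point
  have hp : coeV A + ∑ k, q k ∈ ZonoM A c v := by
    refine Set.add_mem_add rfl ?_
    exact (mem_finsetSum _ _ _).mpr ⟨q, fun k _ => hqmem k, rfl⟩
  have hpφ : φ (coeV A + ∑ k, q k) = φ (coeV A) + ∑ k, M k := by
    rw [map_add, map_sum]
    congr 1
    exact Finset.sum_congr rfl fun k _ => hqφ k
  -- the upper bound on the smaller zonotope
  have hb : ∀ z ∈ ZonoM A c' v', φ z ≤ φ (coeV A) + (∑ k, M k) - φ (coeV (v i)) := by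
    intro z hz
    rw [ZonoM, Set.mem_add] at hz
    obtain ⟨a, ha, y, hy', rfl⟩ := hz
    rw [Set.mem_singleton_iff] at ha
    subst ha
    obtain ⟨r, hr, rfl⟩ := (mem_finsetSum _ _ _).mp hy'
    rw [map_add, map_sum]
    have hbd : ∀ k : Fin (m + 1), φ (r k) ≤ (c' k : ℝ) * max 0 (φ (coeV (v' k))) := by
      intro k
      exact seg_bound φ _ (by positivity) _ _ (hr k (Finset.mem_univ k))
    have hsum : ∑ k : Fin (m + 1), ((c' k : ℝ) * max 0 (φ (coeV (v' k))))
        = (∑ k, M k) - φ (coeV (v i)) := by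
      rw [Fin.sum_univ_castSucc]
      have hlast0 : (c' (Fin.last m) : ℝ) * max 0 (φ (coeV (v' (Fin.last m)))) = 0 := by
        rw [hlast]; simp
      rw [hlast0, add_zero]
      have hterm : ∀ k : Fin m, (c' k.castSucc : ℝ) * max 0 (φ (coeV (v' k.castSucc)))
          = M k - (e k : ℝ) * max 0 (φ (coeV (v k))) := by
        intro k
        rw [hcc, hvv, hM, Nat.cast_sub (hele k)]
        ring
      rw [Finset.sum_congr rfl fun k _ => hterm k, Finset.sum_sub_distrib]
      congr 1
      have hsplit : ∀ k : Fin m, (e k : ℝ) * max 0 (φ (coeV (v k)))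
          = (if k = i then max 0 (φ (coeV (v k))) else 0)
            + (if k = j then max 0 (φ (coeV (v k))) else 0) := by
        intro k
        by_cases hki : k = i
        · subst hki
          rw [hei, if_pos rfl, if_neg hij]
          simp
        · by_cases hkj : k = j
          · subst hkj
            rw [hej, if_neg hki, if_pos rfl]
            simp
          · rw [he0 k hki hkj, if_neg hki, if_neg hkj]
            simp
      rw [Finset.sum_congr rfl fun k _ => hsplit k, Finset.sum_add_distrib,
        Finset.sum_ite_eq' Finset.univ i, Finset.sum_ite_eq' Finset.univ j,
        if_pos (Finset.mem_univ i), if_pos (Finset.mem_univ j),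
        max_eq_right hx.le, max_eq_left hy.le, add_zero]
    calc φ (coeV A) + ∑ k, φ (r k)
        ≤ φ (coeV A) + ∑ k : Fin (m + 1), ((c' k : ℝ) * max 0 (φ (coeV (v' k)))) := by
          exact add_le_add_right (Finset.sum_le_sum fun k _ => hbd k) _
      _ = φ (coeV A) + ((∑ k, M k) - φ (coeV (v i))) := by rw [hsum]
      _ = φ (coeV A) + (∑ k, M k) - φ (coeV (v i)) := by ring
  have := hb _ (Heq.symm ▸ hp)
  rw [hpφ] at this
  linarith


lemma aux_main {n m : ℕ} (P : Set (Fin n → ℝ))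
    (A : Fin n → ℤ) (c : Fin m → ℕ) (v : Fin m → Fin n → ℤ)
    (hprim : ∀ i, IsPrim (v i)) (hpos : ∀ i, 0 < c i)
    (hdist : ∀ i j, i ≠ j → v i ≠ v j ∧ v i ≠ -v j)
    (hsub : ZonoM A c v ⊆ P) (hmaxlen : ∀ M, IsDecomp P M → M ≤ ∑ i, c i)
    (hmin : ∀ (B : Fin n → ℤ) (w : Fin (∑ i, c i) → Fin n → ℤ), (∀ k, IsPrim (w k)) →
      Zono B w ⊆ P → Zono B w ⊆ ZonoM A c v → Zono B w = ZonoM A c v)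
    (i j : Fin m) (hij : i ≠ j)
    (hpar : ∀ k, (2 : ℤ) ∣ (v i k + v j k)) : False := by
  classical
  -- the half-sum u and its primitive direction u'
  set u : Fin n → ℤ := fun k => (v i k + v j k) / 2 with hu
  have hu2 : ∀ k, 2 * u k = v i k + v j k := fun k => Int.mul_ediv_cancel' (hpar k)
  have hsne : ∃ b, v i b + v j b ≠ 0 := by
    by_contra h
    push_neg at h
    exact (hdist i j hij).2 (funext fun k => by
      simp only [Pi.neg_apply]
      linarith [h k])
  obtain ⟨b0, hb0⟩ := hsne
  have hub0 : u b0 ≠ 0 := by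
    intro h
    apply hb0
    rw [← hu2 b0, h, mul_zero]
  set g : ℤ := Finset.univ.gcd u with hg
  have hg0 : g ≠ 0 := by
    intro h
    rw [hg, Finset.gcd_eq_zero_iff] at h
    exact hub0 (h b0 (Finset.mem_univ b0))
  have hgnn : 0 ≤ g := by
    have := Finset.normalize_gcd (s := (Finset.univ : Finset (Fin n))) (f := u)
    rw [← hg, ← Int.abs_eq_normalize] at this
    rw [← this]
    exact abs_nonneg g
  have hgpos : 0 < g := lt_of_le_of_ne hgnn (Ne.symm hg0)
  set u' : Fin n → ℤ := fun k => u k / g with hu'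
  have hgu : ∀ k, g * u' k = u k := fun k =>
    Int.mul_ediv_cancel' (Finset.gcd_dvd (Finset.mem_univ k))
  have hprimu : IsPrim u' := Finset.gcd_div_eq_one (Finset.mem_univ b0) hub0
  -- multiplicities
  set e : Fin m → ℕ := fun k => if k = i ∨ k = j then 1 else 0 with he
  have hele : ∀ k, e k ≤ c k := by
    intro k
    rw [he]
    dsimp only
    split_ifs
    · exact hpos k
    · exact Nat.zero_le _
  have hesum : (∑ k, e k) = 2 := by
    have hsplit : ∀ k, e k = (if k = i then 1 else 0) + (if k = j then 1 else 0) := by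
      intro k
      rw [he]
      dsimp only
      by_cases hki : k = i
      · subst hki
        rw [if_pos (Or.inl rfl), if_pos rfl, if_neg hij]
      · by_cases hkj : k = j
        · subst hkj
          rw [if_pos (Or.inr rfl), if_neg hki, if_pos rfl]
        · rw [if_neg (by tauto), if_neg hki, if_neg hkj]
    rw [Finset.sum_congr rfl fun k _ => hsplit k, Finset.sum_add_distrib,
      Finset.sum_ite_eq' Finset.univ i (fun _ => 1), Finset.sum_ite_eq' Finset.univ j (fun _ => 1),
      if_pos (Finset.mem_univ i), if_pos (Finset.mem_univ j)]
  set N : ℕ := (2 * g).toNat with hN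
  have hNg : (N : ℤ) = 2 * g := Int.toNat_of_nonneg (by positivity)
  set c' : Fin (m + 1) → ℕ := Fin.snoc (fun k => c k - e k) N with hc'
  set v' : Fin (m + 1) → Fin n → ℤ := Fin.snoc v u' with hv'
  have hcc : ∀ k : Fin m, c' k.castSucc = c k - e k := fun k => by
    rw [hc', Fin.snoc_castSucc]
  have hvv : ∀ k : Fin m, v' k.castSucc = v k := fun k => by
    rw [hv', Fin.snoc_castSucc]
  have hclast : c' (Fin.last m) = N := by rw [hc', Fin.snoc_last]
  have hvlast : v' (Fin.last m) = u' := by rw [hv', Fin.snoc_last]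
  -- key identity over ℝ
  have hNu : (N : ℝ) • coeV u' = coeV (v i) + coeV (v j) := by
    funext k
    have hz : (N : ℤ) * u' k = v i k + v j k := by
      rw [hNg, mul_assoc, hgu, hu2]
    show (N : ℝ) * ((u' k : ℤ) : ℝ) = ((v i k : ℤ) : ℝ) + ((v j k : ℤ) : ℝ)
    exact_mod_cast congrArg (fun z : ℤ => (z : ℝ)) hz
  -- inclusion of the modified zonotope
  have hZ' : ZonoM A c' v' ⊆ ZonoM A c v := by
    rw [ZonoM, ZonoM]
    apply Set.add_subset_add_left
    have hstep1 : (∑ k : Fin (m + 1), (c' k : ℝ) • segment ℝ 0 (coeV (v' k)))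
        = (∑ k : Fin m, ((c k - e k : ℕ) : ℝ) • segment ℝ 0 (coeV (v k)))
          + (N : ℝ) • segment ℝ 0 (coeV u') := by
      rw [Fin.sum_univ_castSucc]
      congr 1
      · exact Finset.sum_congr rfl fun k _ => by rw [hcc, hvv]
      · rw [hclast, hvlast]
    have hstep2 : (N : ℝ) • segment ℝ 0 (coeV u')
        ⊆ segment ℝ 0 (coeV (v i)) + segment ℝ 0 (coeV (v j)) := by
      rw [seg_smul, hNu]
      exact seg_add_subset _ _
    have hstep3 : (∑ k : Fin m, ((c k - e k : ℕ) : ℝ) • segment ℝ 0 (coeV (v k)))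
        + (segment ℝ 0 (coeV (v i)) + segment ℝ 0 (coeV (v j)))
        = ∑ k : Fin m, (c k : ℝ) • segment ℝ 0 (coeV (v k)) := by
      have hsplit : ∀ k : Fin m, (c k : ℝ) • segment ℝ 0 (coeV (v k))
          = ((c k - e k : ℕ) : ℝ) • segment ℝ 0 (coeV (v k))
            + ((e k : ℕ) : ℝ) • segment ℝ 0 (coeV (v k)) := by
        intro k
        rw [← Convex.add_smul (convex_segment _ _) (by positivity) (by positivity)]
        congr 1
        rw [Nat.cast_sub (hele k)]
        ring
      have hesplit : ∀ k : Fin m, ((e k : ℕ) : ℝ) • segment ℝ 0 (coeV (v k))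
          = (if k = i then segment ℝ 0 (coeV (v k)) else 0)
            + (if k = j then segment ℝ 0 (coeV (v k)) else 0) := by
        intro k
        rw [he]
        dsimp only
        by_cases hki : k = i
        · subst hki
          rw [if_pos (Or.inl rfl), if_pos rfl, if_neg hij]
          push_cast
          rw [one_smul, add_zero]
        · by_cases hkj : k = j
          · subst hkj
            rw [if_pos (Or.inr rfl), if_neg hki, if_pos rfl]
            push_cast
            rw [one_smul, zero_add]
          · rw [if_neg (by tauto), if_neg hki, if_neg hkj]
            push_cast
            rw [Set.zero_smul_set ⟨0, left_mem_segment _ _ _⟩, add_zero]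
      rw [Finset.sum_congr rfl fun k _ => hsplit k, Finset.sum_add_distrib]
      congr 1
      rw [Finset.sum_congr rfl fun k _ => hesplit k, Finset.sum_add_distrib,
        Finset.sum_ite_eq' Finset.univ i, Finset.sum_ite_eq' Finset.univ j,
        if_pos (Finset.mem_univ i), if_pos (Finset.mem_univ j)]
    rw [hstep1, ← hstep3]
    exact Set.add_subset_add_left hstep2
  -- length computation
  have hsum' : (∑ k, c' k) = (∑ k, c k) - 2 + N := by
    rw [Fin.sum_univ_castSucc]
    rw [Finset.sum_congr rfl fun k _ => hcc k, hclast,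
      Finset.sum_tsub_distrib _ fun k _ => hele k, hesum]
  have hL2 : 2 ≤ ∑ k, c k := by
    rw [← hesum]
    exact Finset.sum_le_sum fun k _ => hele k
  -- the repeated decomposition
  obtain ⟨w, hw1, hw2⟩ := rep (fun z : Fin n → ℤ => segment ℝ 0 (coeV z)) (m + 1) c' v'
  have hZw : Zono A w = ZonoM A c' v' := by
    rw [Zono, ZonoM]
    congr 1
    rw [hw2]
    exact Finset.sum_congr rfl fun k _ =>
      (nsmul_real _ (convex_segment _ _) ⟨0, left_mem_segment _ _ _⟩ _).symm
  have hwprim : ∀ k, IsPrim (w k) := by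
    intro k
    obtain ⟨idx, hidx⟩ := hw1 k
    rw [hidx]
    refine Fin.lastCases (motive := fun idx => IsPrim (v' idx)) ?_ ?_ idx
    · show IsPrim (v' (Fin.last m))
      rw [hvlast]; exact hprimu
    · intro k0
      show IsPrim (v' k0.castSucc)
      rw [hvv]; exact hprim k0
  have hdec : IsDecomp P (∑ k, c' k) :=
    ⟨A, w, hwprim, by rw [hZw]; exact hZ'.trans hsub⟩
  have hNle : (∑ k, c' k) ≤ ∑ k, c k := hmaxlen _ hdec
  have hN2 : N = 2 := by
    have h2N : 2 ≤ N := by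
      have : (2 : ℤ) ≤ (N : ℤ) := by rw [hNg]; linarith
      exact_mod_cast this
    omega
  have hsumL : (∑ k, c' k) = ∑ k, c k := by omega
  -- apply minimality
  set w' : Fin (∑ k, c k) → Fin n → ℤ := w ∘ Fin.cast hsumL.symm with hw'
  have hZw' : Zono A w' = Zono A w := by
    rw [Zono, Zono]
    congr 1
    exact Fintype.sum_equiv (finCongr hsumL.symm) _ _ fun k => rfl
  have hmins := hmin A w' (fun k => hwprim _)
    (by rw [hZw', hZw]; exact hZ'.trans hsub)
    (by rw [hZw', hZw]; exact hZ')
  have Heq : ZonoM A c' v' = ZonoM A c v := by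
    rw [← hZw, ← hZw']
    exact hmins
  -- construct the separating functional
  have hcr : ∃ a, v i a * (v i b0 + v j b0) ≠ v i b0 * (v i a + v j a) := by
    by_contra h
    push_neg at h
    have hc2 : ∀ a a', v i a * (v i a' + v j a') = v i a' * (v i a + v j a) := by
      intro a a'
      apply mul_right_cancel₀ hb0
      linear_combination (v i a' + v j a') * h a - (v i a + v j a) * h a'
    have hcross : ∀ a a', v i a * v j a' = v i a' * v j a := by
      intro a a'
      linear_combination hc2 a a'
    rcases prim_cross (hprim i) (hprim j) hcross with hvij | hvij
    · exact (hdist i j hij).1 hvij.symm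
    · exact (hdist i j hij).2 (by rw [hvij]; simp)
  obtain ⟨a0, ha0⟩ := hcr
  set sa : ℝ := ((v i a0 + v j a0 : ℤ) : ℝ) with hsa
  set sb : ℝ := ((v i b0 + v j b0 : ℤ) : ℝ) with hsb
  set φ : (Fin n → ℝ) →ₗ[ℝ] ℝ := sb • LinearMap.proj a0 - sa • LinearMap.proj b0 with hφ
  have hφap : ∀ z : Fin n → ℝ, φ z = sb * z a0 - sa * z b0 := fun z => rfl
  have hφs : φ (coeV (v i)) + φ (coeV (v j)) = 0 := by
    rw [hφap, hφap, hsa, hsb]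
    simp only [coeV]
    push_cast
    ring
  have hφx : φ (coeV (v i)) ≠ 0 := by
    rw [hφap, hsa, hsb]
    intro h
    apply ha0
    have : ((v i a0 * (v i b0 + v j b0) : ℤ) : ℝ) = ((v i b0 * (v i a0 + v j a0) : ℤ) : ℝ) := by
      simp only [coeV] at h
      push_cast at h ⊢
      linarith [h]
    exact_mod_cast this
  have hφlast : φ (coeV (v' (Fin.last m))) = 0 := by
    rw [hvlast]
    have h2 : φ ((N : ℝ) • coeV u') = 0 := by
      rw [hNu, map_add, hφs]
    rw [map_smul, smul_eq_mul] at h2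
    have hNne : (N : ℝ) ≠ 0 := by
      rw [hN2]; norm_num
    exact (mul_eq_zero.mp h2).resolve_left hNne
  rcases lt_or_gt_of_ne hφx with hneg | hposx
  · -- φ (v i) < 0, so φ (v j) > 0 : swap roles of i and j
    exact aux_pt A c v c' v' e j i (Ne.symm hij) hele
      (by rw [he]; dsimp only; rw [if_pos (Or.inr rfl)])
      (by rw [he]; dsimp only; rw [if_pos (Or.inl rfl)])
      (fun k hkj hki => by rw [he]; dsimp only; rw [if_neg (by tauto)])
      hcc hvv φ hφlast (by linarith) (by linarith) Heq
  · exact aux_pt A c v c' v' e i j hij hele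
      (by rw [he]; dsimp only; rw [if_pos (Or.inl rfl)])
      (by rw [he]; dsimp only; rw [if_pos (Or.inr rfl)])
      (fun k hki hkj => by rw [he]; dsimp only; rw [if_neg (by tauto)])
      hcc hvv φ hφlast hposx (by linarith) Heq


end Aux

/-- A smallest maximal Minkowski decomposition in a lattice polytope `P ⊂ ℝⁿ` has at most
`2ⁿ - 1` distinct primitive direction vectors. -/
theorem stmt8 {n m : ℕ} (P : Set (Fin n → ℝ)) (hP : IsLatticePolytope P)
    (A : Fin n → ℤ) (c : Fin m → ℕ) (v : Fin m → Fin n → ℤ)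
    (hprim : ∀ i, IsPrim (v i)) (hpos : ∀ i, 0 < c i)
    (hdist : ∀ i j, i ≠ j → v i ≠ v j ∧ v i ≠ -v j)
    (hsub : ZonoM A c v ⊆ P) (hmax : MinkLen P (∑ i, c i))
    (hmin : ∀ (B : Fin n → ℤ) (w : Fin (∑ i, c i) → Fin n → ℤ), (∀ k, IsPrim (w k)) →
      Zono B w ⊆ P → Zono B w ⊆ ZonoM A c v → Zono B w = ZonoM A c v) :
    m ≤ 2 ^ n - 1 := by
  classical
  have hne : ∀ i, (fun k => ((v i k : ZMod 2))) ≠ (0 : Fin n → ZMod 2) := by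
    intro i h
    have hdvd : ∀ k, (2 : ℤ) ∣ v i k := by
      intro k
      have := congrFun h k
      rw [Pi.zero_apply, ZMod.intCast_zmod_eq_zero_iff_dvd] at this
      exact_mod_cast this
    have h2 : (2 : ℤ) ∣ Finset.univ.gcd (v i) := Finset.dvd_gcd fun k _ => hdvd k
    rw [hprim i] at h2
    norm_num at h2
  set f : Fin m → {x : Fin n → ZMod 2 // x ≠ 0} :=
    fun i => ⟨fun k => ((v i k : ZMod 2)), hne i⟩ with hf
  have hinj : Function.Injective f := by
    intro i j h
    by_contra hij
    apply aux_main P A c v hprim hpos hdist hsub hmax.2 hmin i j hij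
    intro k
    have hk : ((v i k : ZMod 2)) = ((v j k : ZMod 2)) :=
      congrFun (Subtype.ext_iff.mp h) k
    have h2 : (2 : ℤ) ∣ (v i k - v j k) := by
      have := (ZMod.intCast_zmod_eq_zero_iff_dvd (v i k - v j k) 2).mp
        (by push_cast; rw [sub_eq_zero]; exact_mod_cast hk)
      exact_mod_cast this
    obtain ⟨t, ht⟩ := h2
    exact ⟨t + v j k, by linarith⟩
  have hcard := Fintype.card_le_of_injective f hinj
  have hsub2 : Fintype.card {x : Fin n → ZMod 2 // x ≠ 0} = 2 ^ n - 1 := by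
    have h1 : Fintype.card {x : Fin n → ZMod 2 // x = 0} = 1 := Fintype.card_subtype_eq 0
    have h2 : Fintype.card {x : Fin n → ZMod 2 // ¬x = 0}
        = Fintype.card (Fin n → ZMod 2) - Fintype.card {x : Fin n → ZMod 2 // x = 0} :=
      Fintype.card_subtype_compl _
    have h3 : Fintype.card (Fin n → ZMod 2) = 2 ^ n := by
      rw [Fintype.card_fun]
      simp
    rw [h2, h1, h3]
  rw [Fintype.card_fin, hsub2] at hcard
  exact hcard
end

section
/- Let u, w ∈ ℤ^n be primitive vectors whose images in (ℤ/3)^n satisfy [u] = ±[w] (i.e., u ≡ w or u ≡ −w mod 3), and suppose the segments [0,u] and [0,w] are not translates of each other (u ≠ ±w). Then either u + w or u − w is a nonzero vector divisible by 3; consequently the Minkowski sum [0,u] + [0,w] contains a lattice segment of lattice length 3, so L([0,u]+[0,w]) ≥ 3. -/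
open Pointwise

lemma mem_seg {n : ℕ} {x : Fin n → ℝ} {t : ℝ} (h0 : 0 ≤ t) (h1 : t ≤ 1) :
    t • x ∈ segment ℝ 0 x :=
  ⟨1 - t, t, by linarith, h0, by ring, by simp⟩

lemma seg_elim {n : ℕ} {x p : Fin n → ℝ} (h : p ∈ segment ℝ 0 x) :
    ∃ t : ℝ, 0 ≤ t ∧ t ≤ 1 ∧ p = t • x := by
  obtain ⟨a, b, ha, hb, hab, h⟩ := h
  exact ⟨b, hb, by linarith, by rw [← h]; simp⟩

lemma key_s10 {n : ℕ} (c : Fin n → ℤ) (hc : c ≠ 0) (h3 : ∀ i, (3 : ℤ) ∣ c i) :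
    ∃ z : Fin n → ℤ, IsPrim z ∧
      segment ℝ 0 (coeV (3 • z)) ⊆ segment ℝ 0 (coeV c) := by
  obtain ⟨i0, hi0⟩ : ∃ i, c i ≠ 0 := by
    by_contra h; push_neg at h; exact hc (funext h)
  set g : ℤ := Finset.univ.gcd c with hg
  have hgdvd : ∀ i, g ∣ c i := fun i => Finset.gcd_dvd (Finset.mem_univ i)
  have hgne : g ≠ 0 := fun h => hi0 (Finset.gcd_eq_zero_iff.1 h i0 (Finset.mem_univ i0))
  have hgnn : 0 ≤ g := by
    rw [hg, ← Finset.normalize_gcd, ← Int.abs_eq_normalize]; exact abs_nonneg _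
  have hgpos : 0 < g := lt_of_le_of_ne hgnn (Ne.symm hgne)
  have h3g : (3 : ℤ) ∣ g := Finset.dvd_gcd (fun i _ => h3 i)
  obtain ⟨m, hm⟩ := h3g
  have hmpos : (0 : ℤ) < m := by nlinarith
  set z : Fin n → ℤ := fun i => c i / g with hzdef
  have hceq : ∀ i, c i = 3 * m * z i := by
    intro i
    have h' := Int.ediv_mul_cancel (hgdvd i)
    show c i = 3 * m * (c i / g)
    rw [hm] at h' ⊢
    linarith
  refine ⟨z, Finset.gcd_div_eq_one (Finset.mem_univ i0) hi0, ?_⟩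
  intro p hp
  obtain ⟨t, ht0, ht1, rfl⟩ := seg_elim hp
  have hmR : (0 : ℝ) < (m : ℝ) := by exact_mod_cast hmpos
  have heq : t • coeV (3 • z) = (t / m) • coeV c := by
    funext i
    simp only [coeV, Pi.smul_apply, smul_eq_mul, nsmul_eq_mul, Int.cast_mul]
    rw [hceq i]
    push_cast
    field_simp
    push_cast [Pi.mul_apply, Pi.natCast_apply, Pi.ofNat_apply]; ring
  rw [heq]
  have hm1 : (1 : ℝ) ≤ (m : ℝ) := by exact_mod_cast hmpos
  exact mem_seg (div_nonneg ht0 hmR.le) ((div_le_one hmR).2 (by linarith))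

/-- If `u, w` are primitive, represent the same class in `ℤ₃ℙ^{n-1}` (i.e. `u ≡ ±w mod 3`),
and `[0,u]`, `[0,w]` are not translates of each other, then `u + w` or `u - w` is a nonzero
vector divisible by 3, and `[0,u] + [0,w]` contains a translate of a lattice segment of
lattice length 3; hence `L([0,u] + [0,w]) ≥ 3`. -/
theorem stmt10 {n : ℕ} (u w : Fin n → ℤ) (hu : IsPrim u) (hw : IsPrim w)
    (hclass : (∀ i, (u i - w i) % 3 = 0) ∨ (∀ i, (u i + w i) % 3 = 0))
    (h1 : u ≠ w) (h2 : u ≠ -w) :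
    ((u + w ≠ 0 ∧ ∀ i, (3 : ℤ) ∣ (u i + w i)) ∨
      (u - w ≠ 0 ∧ ∀ i, (3 : ℤ) ∣ (u i - w i))) ∧
    (∃ (A z : Fin n → ℤ), IsPrim z ∧
      ({coeV A} : Set (Fin n → ℝ)) + segment ℝ 0 (coeV (3 • z)) ⊆
        segment ℝ 0 (coeV u) + segment ℝ 0 (coeV w)) ∧
    IsDecomp (segment ℝ 0 (coeV u) + segment ℝ 0 (coeV w)) 3 := by
  have main : ∃ (A z : Fin n → ℤ), IsPrim z ∧
      ({coeV A} : Set (Fin n → ℝ)) + segment ℝ 0 (coeV (3 • z)) ⊆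
        segment ℝ 0 (coeV u) + segment ℝ 0 (coeV w) := by
    rcases hclass with h | h
    · -- u ≡ w, use c = u - w, A = w
      have hc : u - w ≠ 0 := sub_ne_zero.2 h1
      have hdvd : ∀ i, (3 : ℤ) ∣ (u - w) i := fun i =>
        Int.dvd_of_emod_eq_zero (h i)
      obtain ⟨z, hz, hsub⟩ := key_s10 (u - w) hc hdvd
      refine ⟨w, z, hz, ?_⟩
      intro p hp
      obtain ⟨x, hx, y, hy, heq⟩ := hp
      rw [Set.mem_singleton_iff] at hx
      subst hx
      obtain ⟨t, ht0, ht1, rfl⟩ := seg_elim (hsub hy)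
      rw [← heq]
      show coeV w + t • coeV (u - w) ∈ _
      have : coeV w + t • coeV (u - w) = t • coeV u + (1 - t) • coeV w := by
        funext i; simp only [coeV, Pi.add_apply, Pi.sub_apply, Pi.smul_apply, smul_eq_mul]
        push_cast; ring
      rw [this]
      exact Set.add_mem_add (mem_seg ht0 ht1) (mem_seg (by linarith) (by linarith))
    · -- u ≡ -w, use c = u + w, A = 0
      have hc : u + w ≠ 0 := fun h' => h2 (by
        have := congrArg (fun x => x - w) h'
        simpa [add_sub_cancel_right, sub_eq_neg_add] using this)
      have hdvd : ∀ i, (3 : ℤ) ∣ (u + w) i := fun i =>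
        Int.dvd_of_emod_eq_zero (h i)
      obtain ⟨z, hz, hsub⟩ := key_s10 (u + w) hc hdvd
      refine ⟨0, z, hz, ?_⟩
      intro p hp
      obtain ⟨x, hx, y, hy, heq⟩ := hp
      rw [Set.mem_singleton_iff] at hx
      subst hx
      obtain ⟨t, ht0, ht1, rfl⟩ := seg_elim (hsub hy)
      rw [← heq]
      show coeV 0 + t • coeV (u + w) ∈ _
      have : coeV 0 + t • coeV (u + w) = t • coeV u + t • coeV w := by
        funext i; simp only [coeV, Pi.add_apply, Pi.zero_apply, Pi.smul_apply, smul_eq_mul]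
        push_cast; ring
      rw [this]
      exact Set.add_mem_add (mem_seg ht0 ht1) (mem_seg ht0 ht1)
  obtain ⟨A, z, hz, hsub⟩ := main
  refine ⟨?_, ⟨A, z, hz, hsub⟩, ?_⟩
  · rcases hclass with h | h
    · exact Or.inr ⟨sub_ne_zero.2 h1, fun i => Int.dvd_of_emod_eq_zero (h i)⟩
    · refine Or.inl ⟨fun h' => h2 ?_, fun i => Int.dvd_of_emod_eq_zero (h i)⟩
      have := congrArg (fun x => x - w) h'
      simpa [add_sub_cancel_right, sub_eq_neg_add] using this
  · refine ⟨A, fun _ => z, fun _ => hz, ?_⟩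
    intro p hp
    obtain ⟨x, hx, y, hy, heq⟩ := hp
    rw [Set.mem_singleton_iff] at hx
    subst hx
    rw [show (Finset.univ : Finset (Fin 3)).sum
        (fun i => segment ℝ 0 (coeV ((fun _ => z) i))) =
      segment ℝ 0 (coeV z) + segment ℝ 0 (coeV z) + segment ℝ 0 (coeV z) from
      Fin.sum_univ_three _] at hy
    obtain ⟨q12, hq12, q3, hq3, rfl⟩ := hy
    obtain ⟨q1, hq1, q2, hq2, rfl⟩ := hq12
    obtain ⟨t1, h10, h11, rfl⟩ := seg_elim hq1
    obtain ⟨t2, h20, h21, rfl⟩ := seg_elim hq2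
    obtain ⟨t3, h30, h31, rfl⟩ := seg_elim hq3
    rw [← heq]
    show coeV A + (t1 • coeV z + t2 • coeV z + t3 • coeV z) ∈ _
    have heq2 : coeV A + (t1 • coeV z + t2 • coeV z + t3 • coeV z) =
        coeV A + ((t1 + t2 + t3) / 3) • coeV (3 • z) := by
      funext i
      simp only [coeV, Pi.add_apply, Pi.smul_apply, smul_eq_mul, nsmul_eq_mul, Int.cast_mul, Int.cast_ofNat]
      field_simp; push_cast [Pi.mul_apply, Pi.natCast_apply, Pi.ofNat_apply]; ring
    rw [heq2]
    apply hsub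
    exact Set.add_mem_add rfl (mem_seg (by positivity) (by
      rw [div_le_one (by norm_num)]; linarith))
end

section
/- Let P ⊂ ℝ³ be a 3-dimensional lattice polytope with vertices A, B, C, D, E where ABCD is a tetrahedron and E is a lattice point in the interior of ABCD, and let G be the centroid of ABCD. Then E lies in at least one of the four tetrahedra obtained by cutting ABCD with a plane through G parallel to one of its facets, and consequently there is a vertex V of ABCD and a point F on the opposite facet with E on segment VF and VE/VF ≤ 3/4; hence the segment 3·VF (inside 3P) has lattice length at least 4 (since VE is a nontrivial lattice segment), so L(3P) ≥ 4. -/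
open Pointwise

/-- The tetrahedron with lattice vertices `A, B, C, D`. -/
def tet (A B C D : Fin 3 → ℤ) : Set (Fin 3 → ℝ) :=
  convexHull ℝ {coeV A, coeV B, coeV C, coeV D}

/-- If `E` is a lattice point interior to the lattice tetrahedron `ABCD`, then `E` lies in one
of the four corner tetrahedra cut off by planes through the centroid parallel to the facets
(each a homothety of `ABCD` with ratio `3/4` centered at a vertex); consequently there are a
vertex `V` and a point `F` on the opposite facet with `E ∈ [V,F]` and `VE ≤ (3/4)·VF`, and
hence `L(3P) ≥ 4` for `P = ABCD`. -/
theorem stmt17 (A B C D E : Fin 3 → ℤ)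
    (hind : AffineIndependent ℝ ![coeV A, coeV B, coeV C, coeV D])
    (hE : coeV E ∈ interior (tet A B C D)) :
    (∃ V ∈ ({A, B, C, D} : Set (Fin 3 → ℤ)),
      coeV E ∈ AffineMap.homothety (coeV V) (3 / 4 : ℝ) '' tet A B C D) ∧
    (∃ V ∈ ({A, B, C, D} : Set (Fin 3 → ℤ)), ∃ F : Fin 3 → ℝ,
      F ∈ convexHull ℝ (({coeV A, coeV B, coeV C, coeV D} : Set (Fin 3 → ℝ)) \ {coeV V}) ∧
      coeV E ∈ segment ℝ (coeV V) F ∧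
      dist (coeV V) (coeV E) ≤ (3 / 4) * dist (coeV V) F) ∧
    IsDecomp (tet A B C D + tet A B C D + tet A B C D) 4 := by
  classical
  set f : Fin 4 → (Fin 3 → ℝ) := ![coeV A, coeV B, coeV C, coeV D] with hf
  have hspan : affineSpan ℝ (Set.range f) = ⊤ := by
    rw [hind.affineSpan_eq_top_iff_card_eq_finrank_add_one]; simp
  let b : AffineBasis (Fin 4) ℝ (Fin 3 → ℝ) := ⟨f, hind, hspan⟩
  have hbf : ⇑b = f := rfl
  have hrange : Set.range f = ({coeV A, coeV B, coeV C, coeV D} : Set _) := by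
    ext x; simp [hf, Matrix.range_cons, Matrix.range_empty]; tauto
  have htet : tet A B C D = convexHull ℝ (Set.range f) := by rw [hrange]; rfl
  -- coordinates of E
  set w : Fin 4 → ℝ := fun i => b.coord i (coeV E) with hw
  have hwpos : ∀ i, 0 < w i := by
    have h := hE
    rw [htet, ← hbf, b.interior_convexHull] at h
    exact h
  have hsum : ∑ i, w i = 1 := b.sum_coord_apply_eq_one (coeV E)
  have hcomb : ∑ i, w i • f i = coeV E := b.linear_combination_coord_eq_self (coeV E)
  -- max coordinate
  obtain ⟨i₀, -, hmax⟩ := Finset.exists_max_image Finset.univ w Finset.univ_nonempty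
  set a := w i₀ with ha
  have ha4 : (1/4 : ℝ) ≤ a := by
    have h4 : (1:ℝ) ≤ 4 * a := by
      calc (1:ℝ) = ∑ i, w i := hsum.symm
      _ ≤ ∑ _i : Fin 4, a := Finset.sum_le_sum (fun i _ => hmax i (Finset.mem_univ i))
      _ = 4 * a := by simp [Finset.sum_const]
    linarith
  -- erase sum
  have herase : ∑ j ∈ Finset.univ.erase i₀, w j = 1 - a := by
    have h := Finset.sum_erase_add Finset.univ w (Finset.mem_univ i₀)
    rw [hsum] at h; linarith
  have ha1 : a < 1 := by
    have hj : ∃ j, j ≠ i₀ := by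
      refine ⟨if i₀ = 0 then 1 else 0, ?_⟩
      split <;> simp_all [eq_comm]
    obtain ⟨j, hj⟩ := hj
    have h1 : w j ≤ ∑ j ∈ Finset.univ.erase i₀, w j :=
      Finset.single_le_sum (fun i _ => (hwpos i).le) (Finset.mem_erase.mpr ⟨hj, Finset.mem_univ j⟩)
    have := hwpos j
    linarith [herase ▸ h1]
  have h1a : (0:ℝ) < 1 - a := by linarith
  -- key sums
  have heraseC : ∑ j ∈ Finset.univ.erase i₀, w j • f j = coeV E - a • f i₀ := by
    have h := Finset.sum_erase_add Finset.univ (fun j => w j • f j) (Finset.mem_univ i₀)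
    rw [hcomb] at h
    rw [eq_sub_iff_add_eq]
    exact h
  -- the opposite-facet point
  set F : Fin 3 → ℝ := (1-a)⁻¹ • (coeV E - a • f i₀) with hF
  have hFcomb : (1-a) • F = coeV E - a • f i₀ := by
    rw [hF, smul_smul, mul_inv_cancel₀ h1a.ne', one_smul]
  have hEseg : coeV E ∈ segment ℝ (f i₀) F := by
    refine ⟨a, 1-a, (hwpos i₀).le, by linarith, by ring, ?_⟩
    rw [hFcomb]; abel
  have hEF : coeV E - f i₀ = (1-a) • (F - f i₀) := by
    rw [smul_sub, hFcomb]
    module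
  set g : Fin 4 → (Fin 3 → ℤ) := ![A, B, C, D] with hgdef
  have hg : ∀ i, coeV (g i) = f i := by intro i; fin_cases i <;> rfl
  have hmemV : ∀ i : Fin 4, g i ∈ ({A, B, C, D} : Set (Fin 3 → ℤ)) := by
    intro i; fin_cases i <;> simp [hgdef]
  have hfmem : ∀ i : Fin 4, f i ∈ ({coeV A, coeV B, coeV C, coeV D} : Set (Fin 3 → ℝ)) := by
    intro i; rw [← hrange]; exact Set.mem_range_self i
  have hFmem : F ∈ convexHull ℝ
      (({coeV A, coeV B, coeV C, coeV D} : Set (Fin 3 → ℝ)) \ {f i₀}) := by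
    have hz : ∀ i ∈ Finset.univ.erase i₀,
        f i ∈ (({coeV A, coeV B, coeV C, coeV D} : Set (Fin 3 → ℝ)) \ {f i₀}) := by
      intro i hi
      refine ⟨hfmem i, ?_⟩
      simp only [Set.mem_singleton_iff]
      exact fun h => (Finset.mem_erase.mp hi).1 (hind.injective h)
    have hcm := Finset.centerMass_mem_convexHull (Finset.univ.erase i₀)
      (fun i _ => (hwpos i).le) (by rw [herase]; exact h1a) hz
    have hcf : (Finset.univ.erase i₀).centerMass w f = F := by
      rw [Finset.centerMass, herase, heraseC, hF]
    rwa [hcf] at hcm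
  have hVmem : ∀ i : Fin 4, f i ∈ tet A B C D := fun i =>
    subset_convexHull ℝ _ (hfmem i)
  have hFtet : F ∈ tet A B C D :=
    convexHull_mono Set.diff_subset hFmem
  -- homothety part
  have hhom : coeV E ∈ AffineMap.homothety (f i₀) (3 / 4 : ℝ) '' tet A B C D := by
    set w' : Fin 4 → ℝ := fun j => (4/3) * w j - (if j = i₀ then (1/3:ℝ) else 0) with hw'
    have hw'sum : ∑ j, w' j = 1 := by
      rw [hw']
      rw [Finset.sum_sub_distrib, ← Finset.mul_sum, hsum]
      norm_num [Finset.sum_ite_eq']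
    have hw'pos : ∀ j ∈ Finset.univ, 0 ≤ w' j := by
      intro j _
      show (0:ℝ) ≤ 4/3 * w j - if j = i₀ then 1/3 else 0
      by_cases h : j = i₀
      · subst h; rw [if_pos rfl]; linarith
      · rw [if_neg h]; linarith [(hwpos j).le]
    have hX : Finset.univ.centerMass w' f ∈ tet A B C D := by
      rw [htet]
      exact Finset.centerMass_mem_convexHull _ hw'pos (by rw [hw'sum]; norm_num)
        (fun i _ => Set.mem_range_self i)
    refine ⟨_, hX, ?_⟩
    rw [Finset.centerMass_eq_of_sum_1 _ _ hw'sum]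
    have hXval : ∑ j, w' j • f j = (4/3 : ℝ) • coeV E - (1/3 : ℝ) • f i₀ := by
      rw [hw']
      simp only [sub_smul, ite_smul, zero_smul, mul_smul]
      rw [Finset.sum_sub_distrib, ← Finset.smul_sum, hcomb, Finset.sum_ite_eq']
      simp
    rw [hXval]
    simp only [AffineMap.homothety_apply, vsub_eq_sub, vadd_eq_add]
    module
  -- dist part
  have hdist : dist (f i₀) (coeV E) ≤ (3/4) * dist (f i₀) F := by
    have heq : dist (f i₀) (coeV E) = (1-a) * dist (f i₀) F := by
      rw [dist_eq_norm, dist_eq_norm]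
      have : f i₀ - coeV E = (1-a) • (f i₀ - F) := by
        linear_combination (norm := module) -hEF
      rw [this, norm_smul, Real.norm_eq_abs, abs_of_nonneg h1a.le]
    rw [heq]
    exact mul_le_mul_of_nonneg_right (by linarith) dist_nonneg
  refine ⟨⟨g i₀, hmemV i₀, by rw [hg i₀]; exact hhom⟩,
    ⟨g i₀, hmemV i₀, F, by rw [hg i₀]; exact hFmem, by rw [hg i₀]; exact hEseg,
      by rw [hg i₀]; exact hdist⟩, ?_⟩
  -- part 3: Minkowski length of 3P is at least 4
  set u : Fin 3 → ℤ := fun j => E j - g i₀ j with hu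
  have hune : u ≠ 0 := by
    intro h0
    have hEV : coeV E = f i₀ := by
      rw [← hg i₀]; funext j
      have h := congrFun h0 j
      simp only [hu, Pi.zero_apply, sub_eq_zero] at h
      simp [coeV, h]
    have h1 : a = 1 := by
      have := b.coord_apply_eq i₀
      rw [ha, hw]
      calc b.coord i₀ (coeV E) = b.coord i₀ (b i₀) := by rw [hEV, hbf]
      _ = 1 := b.coord_apply_eq i₀
    linarith
  obtain ⟨p, hpu, hpprim⟩ := Finset.extract_gcd u Finset.univ_nonempty
  have hγ0 : Finset.univ.gcd u ≠ 0 := by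
    intro h
    exact hune (funext fun j => Finset.gcd_eq_zero_iff.mp h j (Finset.mem_univ j))
  have hγnn : 0 ≤ Finset.univ.gcd u := by
    rw [← Finset.normalize_gcd, ← Int.abs_eq_normalize]; exact abs_nonneg _
  have hγ1 : 1 ≤ Finset.univ.gcd u := by omega
  set γR : ℝ := ((Finset.univ.gcd u : ℤ) : ℝ) with hγR
  have hγR1 : 1 ≤ γR := by rw [hγR]; exact_mod_cast hγ1
  have hγRpos : 0 < γR := by linarith
  have hup : coeV E - f i₀ = γR • coeV p := by
    funext j
    have h : (E j - g i₀ j : ℤ) = Finset.univ.gcd u * p j := hpu j (Finset.mem_univ j)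
    rw [← hg i₀]
    show (E j : ℝ) - (g i₀ j : ℝ) = γR * (p j : ℝ)
    rw [hγR]
    exact_mod_cast congrArg (fun z : ℤ => (z : ℝ)) h
  refine ⟨fun j => g i₀ j + g i₀ j + g i₀ j, fun _ => p, fun _ => hpprim, ?_⟩
  intro x hx
  rcases Set.mem_add.mp hx with ⟨y, hy, z, hz, rfl⟩
  rcases hy with rfl
  rw [Set.mem_fintype_sum] at hz
  obtain ⟨t, ht, rfl⟩ := hz
  have hsex : ∀ i : Fin 4, ∃ s : ℝ, 0 ≤ s ∧ s ≤ 1 ∧ s • coeV p = t i := by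
    intro i
    rcases ht i with ⟨ai, bi, hai, hbi, hab, heq⟩
    exact ⟨bi, hbi, by linarith, by rw [← heq]; simp⟩
  choose s hs0 hs1 hst using hsex
  set T : ℝ := ∑ i, s i with hT
  have hT0 : 0 ≤ T := Finset.sum_nonneg fun i _ => hs0 i
  have hT4 : T ≤ 4 := by
    calc T ≤ ∑ _i : Fin 4, (1:ℝ) := Finset.sum_le_sum fun i _ => hs1 i
    _ = 4 := by simp
  have hzT : ∑ i, t i = T • coeV p := by
    rw [hT, Finset.sum_smul]
    exact (Finset.sum_congr rfl fun i _ => (hst i).symm)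
  set s' : ℝ := (T / (3 * γR)) * (1 - a) with hs'
  have hs'0 : 0 ≤ s' := by
    apply mul_nonneg (div_nonneg hT0 (by linarith)) (by linarith)
  have hs'1 : s' ≤ 1 := by
    rw [hs', div_mul_eq_mul_div, div_le_one (by positivity)]
    nlinarith
  set z₀ : Fin 3 → ℝ := f i₀ + (T / 3) • coeV p with hz₀
  have hp3 : (T / 3) • coeV p = s' • (F - f i₀) := by
    have h1 : s' • (F - f i₀) = (T / (3 * γR)) • ((1 - a) • (F - f i₀)) := by
      rw [smul_smul, hs']
    rw [h1, ← hEF, hup, smul_smul]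
    congr 1
    field_simp
  have hz₀tet : z₀ ∈ tet A B C D := by
    have hseg : z₀ ∈ segment ℝ (f i₀) F := by
      refine ⟨1 - s', s', by linarith, hs'0, by ring, ?_⟩
      rw [hz₀, hp3]
      module
    have hconv : Convex ℝ (tet A B C D) := by
      unfold tet; exact convex_convexHull ℝ _
    exact hconv.segment_subset (hVmem i₀) hFtet hseg
  have hxz : coeV (fun j => g i₀ j + g i₀ j + g i₀ j) + ∑ i, t i = z₀ + z₀ + z₀ := by
    rw [hzT, hz₀]
    have hA : coeV (fun j => g i₀ j + g i₀ j + g i₀ j) = f i₀ + f i₀ + f i₀ := by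
      funext j
      rw [← hg i₀]
      show ((g i₀ j + g i₀ j + g i₀ j : ℤ) : ℝ) = (g i₀ j : ℝ) + (g i₀ j : ℝ) + (g i₀ j : ℝ)
      push_cast
      ring
    rw [hA]
    module
  rw [hxz]
  exact Set.add_mem_add (Set.add_mem_add hz₀tet hz₀tet) hz₀tet
end

section
/- Let P be the simplex in ℝ³ with vertices (0,0,0), (1,3,0), (0,2,3), (4,1,3). Then P contains exactly the four interior lattice points (1,2,1), (1,2,2), (1,1,1), (2,1,2), and no two lattice points of P determine parallel segments nor a segment of lattice length ≥ 2; consequently the Minkowski length of P is 1 while P has 4 interior lattice points. -/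
open Pointwise

/-- The simplex with vertices `(0,0,0), (1,3,0), (0,2,3), (4,1,3)`. -/
def P18 : Set (Fin 3 → ℝ) :=
  convexHull ℝ {coeV ![0, 0, 0], coeV ![1, 3, 0], coeV ![0, 2, 3], coeV ![4, 1, 3]}


lemma cv (a b c : ℤ) : coeV ![a, b, c] = ![(a:ℝ), (b:ℝ), (c:ℝ)] := by
  funext i; fin_cases i <;> simp [coeV]

lemma memP (x : Fin 3 → ℝ) : x ∈ P18 ↔
    (0 ≤ 9*x 0 - 3*x 1 + 2*x 2 ∧ 9*x 0 - 3*x 1 - 11*x 2 ≤ 0 ∧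
     0 ≤ 3*x 0 + 12*x 1 - 8*x 2 ∧ 3*x 0 + 12*x 1 + 5*x 2 ≤ 39) := by
  constructor
  · intro hx
    have hconv : Convex ℝ {y : Fin 3 → ℝ |
        0 ≤ 9*y 0 - 3*y 1 + 2*y 2 ∧ 9*y 0 - 3*y 1 - 11*y 2 ≤ 0 ∧
        0 ≤ 3*y 0 + 12*y 1 - 8*y 2 ∧ 3*y 0 + 12*y 1 + 5*y 2 ≤ 39} := by
      intro u hu w hw a b ha hb hab
      simp only [Set.mem_setOf_eq, Pi.add_apply, Pi.smul_apply, smul_eq_mul] at *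
      refine ⟨by nlinarith [hu.1, hw.1], by nlinarith [hu.2.1, hw.2.1],
        by nlinarith [hu.2.2.1, hw.2.2.1], by nlinarith [hu.2.2.2, hw.2.2.2]⟩
    refine convexHull_min ?_ hconv hx
    rintro p (rfl | rfl | rfl | rfl) <;> rw [cv] <;> norm_num [Matrix.cons_val_two, Matrix.cons_val_three, Matrix.tail_cons, Matrix.head_cons]
  · rintro ⟨h1, h2, h3, h4⟩
    have hmem : ∀ p ∈ ({coeV ![0, 0, 0], coeV ![1, 3, 0], coeV ![0, 2, 3], coeV ![4, 1, 3]} :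
        Set (Fin 3 → ℝ)), p ∈ P18 := fun p hp => subset_convexHull ℝ _ hp
    set w : Fin 4 → ℝ := ![(39 - 3*x 0 - 12*x 1 - 5*x 2)/39, (3*x 0 + 12*x 1 - 8*x 2)/39,
      (-(9*x 0 - 3*x 1 - 11*x 2))/39, (9*x 0 - 3*x 1 + 2*x 2)/39] with hw
    set z : Fin 4 → (Fin 3 → ℝ) := ![coeV ![0,0,0], coeV ![1,3,0], coeV ![0,2,3], coeV ![4,1,3]]
      with hz
    have key : ∑ i : Fin 4, w i • z i ∈ P18 := by
      apply (convex_convexHull ℝ _).sum_mem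
      · intro i _
        fin_cases i <;> simp [hw] <;> linarith
      · rw [Fin.sum_univ_four]
        simp [hw]
        ring
      · intro i _
        fin_cases i <;> simp [hz] <;> apply hmem <;> simp
    have hco : ∀ j : Fin 3, (∑ i : Fin 4, w i • z i) j = x j := by
      have h0 : (∑ i : Fin 4, w i • z i) 0 = x 0 := by
        rw [Fin.sum_univ_four]
        simp only [Pi.add_apply, Pi.smul_apply, smul_eq_mul, hw, hz, cv]
        norm_num [Matrix.vecHead, Matrix.vecTail, Matrix.cons_val_two, Matrix.cons_val_three, Matrix.tail_cons, Matrix.head_cons]; ring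
      have h1 : (∑ i : Fin 4, w i • z i) 1 = x 1 := by
        rw [Fin.sum_univ_four]
        simp only [Pi.add_apply, Pi.smul_apply, smul_eq_mul, hw, hz, cv]
        norm_num [Matrix.vecHead, Matrix.vecTail, Matrix.cons_val_two, Matrix.cons_val_three, Matrix.tail_cons, Matrix.head_cons]; ring
      have h2 : (∑ i : Fin 4, w i • z i) 2 = x 2 := by
        rw [Fin.sum_univ_four]
        simp only [Pi.add_apply, Pi.smul_apply, smul_eq_mul, hw, hz, cv]
        norm_num [Matrix.vecHead, Matrix.vecTail, Matrix.cons_val_two, Matrix.cons_val_three, Matrix.tail_cons, Matrix.head_cons]; ring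
      intro j; fin_cases j
      exacts [h0, h1, h2]
    rwa [funext hco] at key

def lf (a : Fin 3 → ℝ) : (Fin 3 → ℝ) →ₗ[ℝ] ℝ where
  toFun x := ∑ i, a i * x i
  map_add' x y := by simp [mul_add, Finset.sum_add_distrib]
  map_smul' c x := by
    simp only [smul_eq_mul, RingHom.id_apply, Finset.mul_sum]
    exact Finset.sum_congr rfl fun i _ => by simp [Pi.smul_apply]; ring
lemma interior_hs (a : Fin 3 → ℝ) (c : ℝ) (hd : ∑ i, a i * a i ≠ 0) :
    interior {x : Fin 3 → ℝ | ∑ i, a i * x i ≤ c} = {x | ∑ i, a i * x i < c} := by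
  set f := LinearMap.toContinuousLinearMap (lf a) with hf
  have hfx : ∀ x, f x = ∑ i, a i * x i := fun x => rfl
  have hsurj : Function.Surjective f := by
    intro y
    refine ⟨(y / (∑ i, a i * a i)) • a, ?_⟩
    rw [map_smul]
    simp only [hfx, smul_eq_mul]
    field_simp
    exact mul_div_cancel_right₀ _ (by simpa [sq] using hd)
  have h1 : {x : Fin 3 → ℝ | ∑ i, a i * x i ≤ c} = f ⁻¹' Set.Iic c := rfl
  have h2 : {x : Fin 3 → ℝ | ∑ i, a i * x i < c} = f ⁻¹' Set.Iio c := rfl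
  rw [h1, h2, ← (ContinuousLinearMap.isOpenMap f hsurj).preimage_interior_eq_interior_preimage
    f.continuous, interior_Iic]


lemma intP (x : Fin 3 → ℝ) : x ∈ interior P18 ↔
    (0 < 9*x 0 - 3*x 1 + 2*x 2 ∧ 9*x 0 - 3*x 1 - 11*x 2 < 0 ∧
     0 < 3*x 0 + 12*x 1 - 8*x 2 ∧ 3*x 0 + 12*x 1 + 5*x 2 < 39) := by
  have hP : P18 = ({y : Fin 3 → ℝ | ∑ i, ![(-9:ℝ),3,-2] i * y i ≤ 0} ∩
      ({y : Fin 3 → ℝ | ∑ i, ![(9:ℝ),-3,-11] i * y i ≤ 0} ∩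
      ({y : Fin 3 → ℝ | ∑ i, ![(-3:ℝ),-12,8] i * y i ≤ 0} ∩
       {y : Fin 3 → ℝ | ∑ i, ![(3:ℝ),12,5] i * y i ≤ 39}))) := by
    ext y
    rw [memP]
    simp only [Set.mem_inter_iff, Set.mem_setOf_eq, Fin.sum_univ_three]
    norm_num [Matrix.cons_val_two, Matrix.cons_val_three, Matrix.tail_cons, Matrix.head_cons]
    constructor
    · rintro ⟨h1, h2, h3, h4⟩
      exact ⟨by linarith, by linarith, by linarith, by linarith⟩
    · rintro ⟨h1, h2, h3, h4⟩
      exact ⟨by linarith, by linarith, by linarith, by linarith⟩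
  rw [hP, interior_inter, interior_inter, interior_inter,
    interior_hs _ _ (by norm_num [Fin.sum_univ_three, Matrix.cons_val_two, Matrix.cons_val_three, Matrix.tail_cons, Matrix.head_cons]),
    interior_hs _ _ (by norm_num [Fin.sum_univ_three, Matrix.cons_val_two, Matrix.cons_val_three, Matrix.tail_cons, Matrix.head_cons]),
    interior_hs _ _ (by norm_num [Fin.sum_univ_three, Matrix.cons_val_two, Matrix.cons_val_three, Matrix.tail_cons, Matrix.head_cons]),
    interior_hs _ _ (by norm_num [Fin.sum_univ_three, Matrix.cons_val_two, Matrix.cons_val_three, Matrix.tail_cons, Matrix.head_cons])]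
  simp only [Set.mem_inter_iff, Set.mem_setOf_eq, Fin.sum_univ_three]
  norm_num [Matrix.cons_val_two, Matrix.cons_val_three, Matrix.tail_cons, Matrix.head_cons]
  constructor
  · rintro ⟨h1, h2, h3, h4⟩
    exact ⟨by linarith, by linarith, by linarith, by linarith⟩
  · rintro ⟨h1, h2, h3, h4⟩
    exact ⟨by linarith, by linarith, by linarith, by linarith⟩

def pts : List (Fin 3 → ℤ) := [![0,0,0], ![0,2,3], ![1,1,1], ![1,2,1], ![1,2,2], ![1,3,0], ![2,1,2], ![4,1,3]]

lemma vec_eq {a b c : ℤ} {x : Fin 3 → ℤ} (h0 : x 0 = a) (h1 : x 1 = b) (h2 : x 2 = c) :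
    x = ![a, b, c] := by
  funext i; fin_cases i <;> simpa

lemma memP_int (x : Fin 3 → ℤ) : coeV x ∈ P18 ↔
    (0 ≤ 9*x 0 - 3*x 1 + 2*x 2 ∧ 9*x 0 - 3*x 1 - 11*x 2 ≤ 0 ∧
     0 ≤ 3*x 0 + 12*x 1 - 8*x 2 ∧ 3*x 0 + 12*x 1 + 5*x 2 ≤ 39) := by
  rw [memP]
  simp only [coeV]
  constructor <;> intro h <;> exact_mod_cast h

lemma intP_int (x : Fin 3 → ℤ) : coeV x ∈ interior P18 ↔
    (0 < 9*x 0 - 3*x 1 + 2*x 2 ∧ 9*x 0 - 3*x 1 - 11*x 2 < 0 ∧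
     0 < 3*x 0 + 12*x 1 - 8*x 2 ∧ 3*x 0 + 12*x 1 + 5*x 2 < 39) := by
  rw [intP]
  simp only [coeV]
  constructor <;> intro h <;> exact_mod_cast h

lemma mem_pts (x : Fin 3 → ℤ) (hx : coeV x ∈ P18) : x ∈ pts := by
  rw [memP_int] at hx
  have : (x 0 = 0 ∧ x 1 = 0 ∧ x 2 = 0) ∨ (x 0 = 0 ∧ x 1 = 2 ∧ x 2 = 3) ∨
      (x 0 = 1 ∧ x 1 = 1 ∧ x 2 = 1) ∨ (x 0 = 1 ∧ x 1 = 2 ∧ x 2 = 1) ∨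
      (x 0 = 1 ∧ x 1 = 2 ∧ x 2 = 2) ∨ (x 0 = 1 ∧ x 1 = 3 ∧ x 2 = 0) ∨
      (x 0 = 2 ∧ x 1 = 1 ∧ x 2 = 2) ∨ (x 0 = 4 ∧ x 1 = 1 ∧ x 2 = 3) := by
    obtain ⟨h1, h2, h3, h4⟩ := hx
    set a := x 0 with ha
    set b := x 1 with hb
    set c := x 2 with hc
    have hc1 : 0 ≤ c := by omega
    have hc2 : c ≤ 3 := by omega
    have hb1 : -1 ≤ b := by omega
    have hb2 : b ≤ 3 := by omega
    have ha1 : 0 ≤ a := by omega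
    have ha2 : a ≤ 4 := by omega
    interval_cases a <;> interval_cases b <;> omega
  rcases this with ⟨h0,h1,h2⟩|⟨h0,h1,h2⟩|⟨h0,h1,h2⟩|⟨h0,h1,h2⟩|⟨h0,h1,h2⟩|⟨h0,h1,h2⟩|⟨h0,h1,h2⟩|⟨h0,h1,h2⟩ <;>
    rw [vec_eq h0 h1 h2] <;> simp [pts]

lemma part1 : {x : Fin 3 → ℤ | coeV x ∈ interior P18} =
    {![1, 2, 1], ![1, 2, 2], ![1, 1, 1], ![2, 1, 2]} := by
  ext x
  rw [Set.mem_setOf_eq, intP_int]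
  simp only [Set.mem_insert_iff, Set.mem_singleton_iff]
  constructor
  · rintro ⟨h1, h2, h3, h4⟩
    have : (x 0 = 1 ∧ x 1 = 2 ∧ x 2 = 1) ∨ (x 0 = 1 ∧ x 1 = 2 ∧ x 2 = 2) ∨
        (x 0 = 1 ∧ x 1 = 1 ∧ x 2 = 1) ∨ (x 0 = 2 ∧ x 1 = 1 ∧ x 2 = 2) := by
      set a := x 0 with ha
      set b := x 1 with hb
      set c := x 2 with hc
      have hc1 : 0 ≤ c := by omega
      have hc2 : c ≤ 3 := by omega
      have hb1 : -1 ≤ b := by omega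
      have hb2 : b ≤ 3 := by omega
      have ha1 : 0 ≤ a := by omega
      have ha2 : a ≤ 4 := by omega
      interval_cases a <;> interval_cases b <;> omega
    rcases this with ⟨h0,h1',h2'⟩|⟨h0,h1',h2'⟩|⟨h0,h1',h2'⟩|⟨h0,h1',h2'⟩
    · exact Or.inl (vec_eq h0 h1' h2')
    · exact Or.inr (Or.inl (vec_eq h0 h1' h2'))
    · exact Or.inr (Or.inr (Or.inl (vec_eq h0 h1' h2')))
    · exact Or.inr (Or.inr (Or.inr (vec_eq h0 h1' h2')))
  · rintro (rfl | rfl | rfl | rfl) <;> norm_num [Matrix.cons_val_two, Matrix.tail_cons, Matrix.head_cons]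

lemma coeV_add {n : ℕ} (a b : Fin n → ℤ) : coeV (a + b) = coeV a + coeV b := by
  funext i; simp [coeV]


set_option maxRecDepth 10000 in
lemma key2 : ∀ x ∈ pts, ∀ y ∈ pts, x ≠ y → Finset.univ.gcd (fun i => y i - x i) = 1 := by decide

set_option maxRecDepth 100000 in
lemma key3 : ∀ x ∈ pts, ∀ y ∈ pts, ∀ z ∈ pts, ∀ w ∈ pts, x ≠ y → z ≠ w →
    ¬(x = z ∧ y = w) → ¬(x = w ∧ y = z) →
    (¬ ∀ i, y i - x i = w i - z i) ∧ (¬ ∀ i, y i - x i = z i - w i) := by decide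

lemma part2 : ∀ x y : Fin 3 → ℤ, coeV x ∈ P18 → coeV y ∈ P18 → x ≠ y →
    Finset.univ.gcd (fun i => y i - x i) = 1 :=
  fun x y hx hy hxy => key2 x (mem_pts x hx) y (mem_pts y hy) hxy

lemma part3 : ∀ x y z w : Fin 3 → ℤ, coeV x ∈ P18 → coeV y ∈ P18 → coeV z ∈ P18 →
    coeV w ∈ P18 → x ≠ y → z ≠ w → ({x, y} : Set (Fin 3 → ℤ)) ≠ {z, w} →
    ¬ ∃ p q : ℤ, p ≠ 0 ∧ q ≠ 0 ∧ ∀ i, p * (y i - x i) = q * (w i - z i) := by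
  rintro x y z w hx hy hz hw hxy hzw hpair ⟨p, q, hp, hq, hpq⟩
  have h1 : ¬(x = z ∧ y = w) := fun h => hpair (Set.pair_eq_pair_iff.2 (Or.inl h))
  have h2 : ¬(x = w ∧ y = z) := fun h => hpair (Set.pair_eq_pair_iff.2 (Or.inr h))
  have g1 : Finset.univ.gcd (fun i => y i - x i) = 1 := part2 x y hx hy hxy
  have g2 : Finset.univ.gcd (fun i => w i - z i) = 1 := part2 z w hz hw hzw
  have hkey := key3 x (mem_pts x hx) y (mem_pts y hy) z (mem_pts z hz) w (mem_pts w hw)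
    hxy hzw h1 h2
  have hqp : q ∣ p := by
    have hdvd : q ∣ Finset.univ.gcd (fun i => p * (y i - x i)) :=
      Finset.dvd_gcd (fun i _ => by rw [hpq i]; exact dvd_mul_right _ _)
    rw [Finset.gcd_mul_left, g1, mul_one] at hdvd
    exact dvd_normalize_iff.1 hdvd
  have hpq' : p ∣ q := by
    have hdvd : p ∣ Finset.univ.gcd (fun i => q * (w i - z i)) :=
      Finset.dvd_gcd (fun i _ => by rw [← hpq i]; exact dvd_mul_right _ _)
    rw [Finset.gcd_mul_left, g2, mul_one] at hdvd
    exact dvd_normalize_iff.1 hdvd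
  have habs : p.natAbs = q.natAbs :=
    Nat.dvd_antisymm (Int.natAbs_dvd_natAbs.2 hpq') (Int.natAbs_dvd_natAbs.2 hqp)
  rcases Int.natAbs_eq_natAbs_iff.1 habs with heq | heq
  · subst heq
    exact hkey.1 fun i => mul_left_cancel₀ hp (hpq i)
  · apply hkey.2
    intro i
    have h := hpq i
    rw [heq] at h
    have : q * (y i - x i) = q * (z i - w i) := by ring_nf; ring_nf at h; linarith
    exact mul_left_cancel₀ hq this

lemma coeV_zero : coeV ![0, 0, 0] = 0 := by
  funext i; fin_cases i <;> simp [coeV]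

lemma part4 : MinkLen P18 1 := by
  constructor
  · refine ⟨![0, 0, 0], ![![1, 3, 0]], fun i => by fin_cases i; exact (by decide : Finset.univ.gcd ![(1:ℤ), 3, 0] = 1), ?_⟩
    have hZ : Zono ![0, 0, 0] ![![1, 3, 0]] = segment ℝ 0 (coeV ![1, 3, 0]) := by
      rw [Zono, coeV_zero, Set.singleton_zero, zero_add, Fin.sum_univ_one]
      norm_num
    rw [hZ]
    apply (convex_convexHull ℝ _).segment_subset
    · rw [← coeV_zero]
      exact subset_convexHull ℝ _ (by left; rfl)
    · exact subset_convexHull ℝ _ (by right; left; rfl)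
  · rintro M ⟨A, v, hprim, hsub⟩
    by_contra hM
    push_neg at hM
    have h2M : 2 ≤ M := hM
    set i0 : Fin M := ⟨0, by omega⟩ with hi0
    set i1 : Fin M := ⟨1, by omega⟩ with hi1
    have hne : i0 ≠ i1 := Fin.ne_of_val_ne (by simp [hi0, hi1])
    have hv : ∀ i, v i ≠ 0 := by
      intro i h
      have h0 : Finset.univ.gcd (v i) = 0 :=
        Finset.gcd_eq_zero_iff.2 (fun j _ => by rw [h]; rfl)
      rw [hprim i] at h0
      exact one_ne_zero h0
    have hmem : ∀ g : Fin M → Fin 3 → ℝ, (∀ i, g i ∈ segment ℝ 0 (coeV (v i))) →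
        coeV A + ∑ i, g i ∈ P18 := fun g hg =>
      hsub (Set.add_mem_add (Set.mem_singleton _) ((Set.mem_fintype_sum _ _).2 ⟨g, hg, rfl⟩))
    have hA : coeV A ∈ P18 := by
      have := hmem (fun _ => 0) (fun i => left_mem_segment ℝ _ _)
      simpa using this
    have hA0 : coeV (A + v i0) ∈ P18 := by
      have := hmem (fun j => if j = i0 then coeV (v i0) else 0) (fun i => by
        by_cases h : i = i0
        · subst h; simp only [if_pos rfl]; exact right_mem_segment ℝ _ _
        · simp only [if_neg h]; exact left_mem_segment ℝ _ _)
      rw [Finset.sum_ite_eq' Finset.univ i0 (fun _ => coeV (v i0))] at this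
      simp only [Finset.mem_univ, if_pos] at this
      rwa [← coeV_add] at this
    have hA1 : coeV (A + v i1) ∈ P18 := by
      have := hmem (fun j => if j = i1 then coeV (v i1) else 0) (fun i => by
        by_cases h : i = i1
        · subst h; simp only [if_pos rfl]; exact right_mem_segment ℝ _ _
        · simp only [if_neg h]; exact left_mem_segment ℝ _ _)
      rw [Finset.sum_ite_eq' Finset.univ i1 (fun _ => coeV (v i1))] at this
      simp only [Finset.mem_univ, if_pos] at this
      rwa [← coeV_add] at this
    have hA01 : coeV (A + v i0 + v i1) ∈ P18 := by
      have := hmem ((fun j => if j = i0 then coeV (v i0) else 0) +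
          (fun j => if j = i1 then coeV (v i1) else 0)) (fun i => by
        by_cases h : i = i0
        · subst h
          simp only [Pi.add_apply, if_pos rfl, if_neg hne, add_zero]
          exact right_mem_segment ℝ _ _
        · by_cases h' : i = i1
          · subst h'
            simp only [Pi.add_apply, if_neg h, if_pos rfl, zero_add]
            exact right_mem_segment ℝ _ _
          · simp only [Pi.add_apply, if_neg h, if_neg h', add_zero]
            exact left_mem_segment ℝ _ _)
      simp only [Pi.add_apply] at this
      rw [Finset.sum_add_distrib, Finset.sum_ite_eq' Finset.univ i0 (fun _ => coeV (v i0)),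
        Finset.sum_ite_eq' Finset.univ i1 (fun _ => coeV (v i1))] at this
      simp only [Finset.mem_univ, if_pos] at this
      rwa [← add_assoc, ← coeV_add, ← coeV_add] at this
    have hne1 : A ≠ A + v i0 := fun h => hv i0 (funext fun j => by
      have := congrFun h j
      simp only [Pi.add_apply, Pi.zero_apply] at this ⊢
      omega)
    have hne2 : A + v i1 ≠ A + v i0 + v i1 := fun h => hv i0 (funext fun j => by
      have := congrFun h j
      simp only [Pi.add_apply, Pi.zero_apply] at this ⊢
      omega)
    have hpairne : ({A, A + v i0} : Set (Fin 3 → ℤ)) ≠ {A + v i1, A + v i0 + v i1} := by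
      intro h
      rcases Set.pair_eq_pair_iff.1 h with ⟨e1, e2⟩ | ⟨e1, e2⟩
      · exact hv i1 (funext fun j => by
          have := congrFun e1 j
          simp only [Pi.add_apply, Pi.zero_apply] at this ⊢
          omega)
      · apply hv i0
        funext j
        have f1 := congrFun e1 j
        have f2 := congrFun e2 j
        simp only [Pi.add_apply, Pi.zero_apply] at f1 f2 ⊢
        omega
    exact part3 A (A + v i0) (A + v i1) (A + v i0 + v i1) hA hA0 hA1 hA01 hne1 hne2 hpairne
      ⟨1, 1, one_ne_zero, one_ne_zero, fun i => by simp only [Pi.add_apply]; ring⟩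


/-- `P18` has exactly the four interior lattice points `(1,2,1), (1,2,2), (1,1,1), (2,1,2)`;
no segment between lattice points of `P18` has lattice length ≥ 2, no two distinct such
segments are parallel, and `L(P18) = 1` while `P18` has 4 interior lattice points. -/
theorem stmt18 :
    {x : Fin 3 → ℤ | coeV x ∈ interior P18} =
      {![1, 2, 1], ![1, 2, 2], ![1, 1, 1], ![2, 1, 2]} ∧
    (∀ x y : Fin 3 → ℤ, coeV x ∈ P18 → coeV y ∈ P18 → x ≠ y →
      Finset.univ.gcd (fun i => y i - x i) = 1) ∧
    (∀ x y z w : Fin 3 → ℤ, coeV x ∈ P18 → coeV y ∈ P18 → coeV z ∈ P18 → coeV w ∈ P18 →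
      x ≠ y → z ≠ w → ({x, y} : Set (Fin 3 → ℤ)) ≠ {z, w} →
      ¬ ∃ p q : ℤ, p ≠ 0 ∧ q ≠ 0 ∧ ∀ i, p * (y i - x i) = q * (w i - z i)) ∧
    MinkLen P18 1 :=
  ⟨part1, part2, part3, part4⟩
end
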